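/- arXiv:1410.6174 — 4 statements merged into one kernel-verified Lean document; each statement's English description precedes it below -/
import Mathlib

section
/- For every integer k ≥ 2, every r ∈ {1, …, k−1}, every τ in the upper half-plane and every u ∈ ℂ, one has ĥ_{k,r}(τ; u) + (−1)^{r+1} ĥ_{k,r}(τ; u+1) = (2/√(−iτ)) · Σ_{p=1}^{k−1} Ŝ^{(k)}_{r,p} · e^{iπk(u+p/k)²/(2τ)}, where √(−iτ) is the principal square root. -/
noncomputable section

open Complex MeasureTheory Matrix

namespace DSLST

/-- Dedekind eta function. -/
def eta (τ : ℂ) : ℂ :=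
  Complex.exp (2 * (Real.pi : ℂ) * Complex.I * τ / 24) *
    ∏' n : ℕ, (1 - Complex.exp (2 * (Real.pi : ℂ) * Complex.I * τ * ((n : ℂ) + 1)))

/-- Jacobi theta function θ_{ab}(τ; z). -/
def theta (a b : ℤ) (τ z : ℂ) : ℂ :=
  ∑' n : ℤ, Complex.exp ((Real.pi : ℂ) * Complex.I * τ * ((n : ℂ) + (a : ℂ) / 2) ^ 2
    + 2 * (Real.pi : ℂ) * Complex.I * (z + (b : ℂ) / 2) * ((n : ℂ) + (a : ℂ) / 2))

/-- Level-k theta ϑ_{k,r}(τ; z). -/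
def thetaLvl (k r : ℤ) (τ z : ℂ) : ℂ :=
  ∑' n : ℤ, Complex.exp
    (2 * (Real.pi : ℂ) * Complex.I * τ * ((r : ℂ) + 2 * (k : ℂ) * (n : ℂ)) ^ 2 / (4 * (k : ℂ))
      + 2 * (Real.pi : ℂ) * Complex.I * z * ((r : ℂ) + 2 * (k : ℂ) * (n : ℂ)))

/-- ϑ̂_{k,r} = ϑ_{k,r} − ϑ_{k,−r}. -/
def thetaHat (k r : ℤ) (τ z : ℂ) : ℂ := thetaLvl k r τ z - thetaLvl k (-r) τ z

/-- Affine SU(2) character at level k−2: χ^{(k−2)}_{l−1}(τ; z) = i ϑ̂_{k,l}(τ; z/2)/θ₁₁(τ; z). -/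
def chi (k l : ℤ) (τ z : ℂ) : ℂ :=
  Complex.I * thetaHat k l τ (z / 2) / theta 1 1 τ z

/-- N=2 minimal model character C^{m,k}_r[0,0]. -/
def C00 (k m r : ℤ) (τ z : ℂ) : ℂ :=
  if (m - r) % 2 = 0 then
    Complex.I *
      Complex.exp (2 * (Real.pi : ℂ) * Complex.I * τ *
        (((m : ℂ) + 1) ^ 2 - (r : ℂ) ^ 2 - (k : ℂ) ^ 2) / (4 * (k : ℂ))) *
      Complex.exp (2 * (Real.pi : ℂ) * Complex.I * z * (r : ℂ) / (k : ℂ)) *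
      theta 0 0 τ z * theta 1 1 ((k : ℂ) * τ) (((m : ℂ) + 1) * τ) * eta ((k : ℂ) * τ) ^ 3 /
      (theta 1 0 ((k : ℂ) * τ) (z - ((m : ℂ) + 1 + (r : ℂ)) * τ / 2) *
        theta 1 0 ((k : ℂ) * τ) (z + ((m : ℂ) + 1 - (r : ℂ)) * τ / 2) * eta τ ^ 3)
  else 0

/-- N=2 minimal model character C^{m,k}_r[1,1]. -/
def C11 (k m r : ℤ) (τ z : ℂ) : ℂ :=
  - Complex.exp (2 * (Real.pi : ℂ) * Complex.I * τ * (-((k : ℂ) - 2)) / (8 * (k : ℂ))) *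
    Complex.exp (2 * (Real.pi : ℂ) * Complex.I * (z + τ / 2 + 1 / 2) * ((k : ℂ) - 2) / (2 * (k : ℂ))) *
    Complex.exp (-(Real.pi : ℂ) * Complex.I * (r : ℂ) / (k : ℂ)) *
    C00 k m (r + 1) τ (z + τ / 2 + 1 / 2)

/-- Multivariable Appell–Lerch sum μ^{k,j,j'}(τ; v, u, w). -/
def mu (k j j' : ℤ) (τ v u w : ℂ) : ℂ :=
  Complex.exp (2 * (Real.pi : ℂ) * Complex.I * v * (j' : ℂ) / (k : ℂ)) / theta 1 1 τ u *
    ∑' n : ℤ,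
      Complex.exp (2 * (Real.pi : ℂ) * Complex.I * τ * ((n : ℂ) ^ 2 + (j' : ℂ) * (n : ℂ)) / (k : ℂ)) /
          (1 - Complex.exp (2 * (Real.pi : ℂ) * Complex.I * (v + (n : ℂ) * τ))) *
        Complex.exp (2 * (Real.pi : ℂ) * Complex.I * (n : ℂ) *
          (u + (1 - 2 / (k : ℂ)) * w - (1 - 2 / (k : ℂ)) * v)) *
        C11 k (j - 1) (2 * n + j') τ (w - v)

/-- Membership in the lattice ℤτ + ℤ. -/
def inLat (τ z : ℂ) : Prop := ∃ m n : ℤ, z = (m : ℂ) * τ + (n : ℂ)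

/-- Ŝ^{(k)}_{r,r'} = √(2/k)·sin(πrr'/k). -/
def Shat (k r r' : ℤ) : ℂ :=
  ((Real.sqrt (2 / (k : ℝ)) * Real.sin (Real.pi * (r : ℝ) * (r' : ℝ) / (k : ℝ)) : ℝ) : ℂ)

/-- ĥ_{k,r}(τ; u). -/
def hhat (k r : ℤ) (τ u : ℂ) : ℂ :=
  Complex.I * ∫ x : ℝ,
    Complex.exp ((Real.pi : ℂ) * Complex.I * (k : ℂ) * τ * (x : ℂ) ^ 2 / 2) *
      Complex.exp (-(Real.pi : ℂ) * (k : ℂ) * u * (x : ℂ)) *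
      (1 / (1 - Complex.exp ((Real.pi : ℂ) * (x : ℂ) - (Real.pi : ℂ) * Complex.I * (r : ℂ) / (k : ℂ))) -
        1 / (1 - Complex.exp ((Real.pi : ℂ) * (x : ℂ) + (Real.pi : ℂ) * Complex.I * (r : ℂ) / (k : ℂ))))

/-- E(z) = 2∫₀^z e^{−πt²}dt. -/
def Efun (z : ℝ) : ℝ := 2 * ∫ t in (0 : ℝ)..z, Real.exp (-Real.pi * t ^ 2)

/-- A single term of the R̂ series. -/
def Rterm (k : ℤ) (τ u : ℂ) (n : ℤ) : ℂ :=
  ((Real.sign ((n : ℝ) + 1 / 2) -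
      Efun (((n : ℝ) + (k : ℝ) * u.im / τ.im) * Real.sqrt (τ.im / (k : ℝ))) : ℝ) : ℂ) *
    Complex.exp (-(Real.pi : ℂ) * Complex.I * (n : ℂ) ^ 2 * τ / (2 * (k : ℂ))
      - (Real.pi : ℂ) * Complex.I * (n : ℂ) * u)

/-- R̂_{k,r}(τ; u). -/
def Rhat (k r : ℤ) (τ u : ℂ) : ℂ :=
  (∑' m : ℤ, Rterm k τ u (r + 2 * k * m)) - ∑' m : ℤ, Rterm k τ u (-r + 2 * k * m)

/-- Wirtinger derivative ∂/∂ū. -/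
def dzbar (f : ℂ → ℂ) (u : ℂ) : ℂ :=
  (1 / 2) * ((fderiv ℝ f u) 1 + Complex.I * (fderiv ℝ f u) Complex.I)

/-- Ω^{(k,d)}_{r,r'}. -/
def Omega (k d r r' : ℤ) : ℂ :=
  if (r + r') % (2 * d) = 0 ∧ (r - r') % (2 * k / d) = 0 then 1 else 0

/-- Ω̂^{(k,d)}_{r,r'} = Ω^{(k,d)}_{r,r'} − Ω^{(k,d)}_{r,−r'}. -/
def OmegaHat (k d r r' : ℤ) : ℂ := Omega k d r r' - Omega k d r (-r')

/-- Completion μ̃^{k,j,j'}. -/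
def mutilde (k j j' : ℤ) (τ v u w : ℂ) : ℂ :=
  (1 / 2) * (mu k j j' τ v u w + mu k (k - j) (k - j') τ v u w) -
    (1 / 4) * (if (j - j') % 2 = 0 then (1 : ℂ) else 0) *
      (chi k j τ (u - v + w) * Rhat k j' τ (u - v + (1 - 2 / (k : ℂ)) * w) +
        chi k (k - j) τ (u - v + w) * Rhat k (k - j') τ (u - v + (1 - 2 / (k : ℂ)) * w))

/-- μ^{(k,d)} = Σ Ω̂ μ. -/
def muKD (k d : ℤ) (τ v u w : ℂ) : ℂ :=
  ∑ j ∈ Finset.Icc (1 : ℤ) (k - 1), ∑ j' ∈ Finset.Icc (1 : ℤ) (k - 1),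
    OmegaHat k d j j' * mu k j j' τ v u w

/-- μ̃^{(k,d)} = Σ Ω̂ μ̃. -/
def mutildeKD (k d : ℤ) (τ v u w : ℂ) : ℂ :=
  ∑ j ∈ Finset.Icc (1 : ℤ) (k - 1), ∑ j' ∈ Finset.Icc (1 : ℤ) (k - 1),
    OmegaHat k d j j' * mutilde k j j' τ v u w

/-- Weak Jacobi form φ_{−2,1}. -/
def phiM21 (τ z : ℂ) : ℂ := -(theta 1 1 τ z ^ 2) / eta τ ^ 6

/-- Weak Jacobi form φ_{0,1}. -/
def phi01 (τ z : ℂ) : ℂ :=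
  4 * (theta 1 0 τ z ^ 2 / theta 1 0 τ 0 ^ 2 + theta 0 0 τ z ^ 2 / theta 0 0 τ 0 ^ 2 +
    theta 0 1 τ z ^ 2 / theta 0 1 τ 0 ^ 2)

/-- B^{k,j,j'}_{ab}(τ; v,u,w). -/
def Bfun (k j j' a b : ℤ) (τ v u w : ℂ) : ℂ :=
  theta a b τ v * theta a b τ u / eta τ ^ 3 *
    mu k j j' τ (v + ((a : ℂ) - 1) * τ / 2 + ((b : ℂ) - 1) / 2)
      (u + ((a : ℂ) - 1) * τ / 2 + ((b : ℂ) - 1) / 2) w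

/-- B_{(k,d)}(τ; u). -/
def Bkd (k d : ℤ) (τ u : ℂ) : ℂ :=
  (1 / 2) * ((Real.sqrt ((k : ℝ) * τ.im) : ℝ) : ℂ) *
    Complex.exp (-(Real.pi : ℂ) * (k : ℂ) * (u.im : ℂ) ^ 2 / (τ.im : ℂ)) *
    ∑ r ∈ Finset.range (2 * k).toNat, ∑ r' ∈ Finset.range (2 * k).toNat,
      thetaHat k (r : ℤ) τ (u / 2) * (starRingEnd ℂ) (thetaHat k (r' : ℤ) τ (u / 2)) *
        Omega k d (r : ℤ) (r' : ℤ)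

/-- Fundamental domain {aτ + b : a, b ∈ [0,1)} of the torus E(τ). -/
def fundDom (τ : ℂ) : Set ℂ :=
  {z : ℂ | ∃ a b : ℝ, a ∈ Set.Ico (0 : ℝ) 1 ∧ b ∈ Set.Ico (0 : ℝ) 1 ∧ z = (a : ℂ) * τ + (b : ℂ)}

/-- ∫_{E(τ)} B_{(k,d)}(τ; u) du₁du₂/τ₂. -/
def torusInt (k d : ℤ) (τ : ℂ) : ℂ :=
  (1 / (τ.im : ℂ)) * ∫ u in fundDom τ, Bkd k d τ u

/-- The matrix S^{(k)} with indices in ℤ/2kℤ (represented by Fin (2k)). -/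
def Smat (k : ℕ) : Matrix (Fin (2 * k)) (Fin (2 * k)) ℂ :=
  Matrix.of fun r r' => (1 / ((Real.sqrt (2 * (k : ℝ)) : ℝ) : ℂ)) *
    Complex.exp (-(Real.pi : ℂ) * Complex.I * ((r : ℕ) : ℂ) * ((r' : ℕ) : ℂ) / (k : ℂ))

/-- The matrix T^{(k)}. -/
def Tmat (k : ℕ) : Matrix (Fin (2 * k)) (Fin (2 * k)) ℂ :=
  Matrix.of fun r r' => if r = r' then
    Complex.exp ((Real.pi : ℂ) * Complex.I * ((r : ℕ) : ℂ) ^ 2 / (2 * (k : ℂ))) else 0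

/-- The matrix Ω^{(k,d)}. -/
def OmatBig (k d : ℕ) : Matrix (Fin (2 * k)) (Fin (2 * k)) ℂ :=
  Matrix.of fun r r' => Omega (k : ℤ) (d : ℤ) ((r : ℕ) : ℤ) ((r' : ℕ) : ℤ)

/-- The matrix Ŝ^{(k)} on indices {1,…,k−1}. -/
def ShatMat (k : ℕ) : Matrix (Fin (k - 1)) (Fin (k - 1)) ℂ :=
  Matrix.of fun l l' => Shat (k : ℤ) (((l : ℕ) : ℤ) + 1) (((l' : ℕ) : ℤ) + 1)

/-- The matrix Ω̂^{(k,d)} on indices {1,…,k−1}. -/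
def OmatHat (k d : ℕ) : Matrix (Fin (k - 1)) (Fin (k - 1)) ℂ :=
  Matrix.of fun r r' => OmegaHat (k : ℤ) (d : ℤ) (((r : ℕ) : ℤ) + 1) (((r' : ℕ) : ℤ) + 1)

end DSLST
namespace DSLST

lemma cpow_real_mul {a : ℝ} (ha : 0 < a) {z : ℂ} (hz : z ≠ 0) :
    ((a : ℂ) * z) ^ ((1:ℂ)/2) = (Real.sqrt a : ℂ) * z ^ ((1:ℂ)/2) := by
  have ha' : (a:ℂ) ≠ 0 := by exact_mod_cast ha.ne'
  rw [Complex.cpow_def_of_ne_zero (mul_ne_zero ha' hz), Complex.log_ofReal_mul ha hz,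
    Complex.cpow_def_of_ne_zero hz, add_mul, Complex.exp_add]
  congr 1
  have h2 : ((Real.log a : ℂ)) * (1/2) = ((Real.log a * (1/2) : ℝ) : ℂ) := by push_cast; ring
  rw [h2, ← Complex.ofReal_exp, Real.sqrt_eq_rpow, Real.rpow_def_of_pos ha]

-- norm lower bound
lemma norm_one_sub_exp (a θ : ℝ) : |Real.sin θ| ≤ ‖1 - Complex.exp (↑a + ↑θ * I)‖ := by
  have hre : (1 - Complex.exp (↑a + ↑θ * I)).re = 1 - Real.exp a * Real.cos θ := by
    simp [Complex.exp_re]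
  have him : (1 - Complex.exp (↑a + ↑θ * I)).im = -(Real.exp a * Real.sin θ) := by
    simp [Complex.exp_im]
  rw [Complex.norm_def, Complex.normSq_apply, hre, him,
    ← Real.sqrt_sq_eq_abs]
  apply Real.sqrt_le_sqrt
  nlinarith [sq_nonneg (Real.exp a - Real.cos θ), Real.sin_sq_add_cos_sq θ]

lemma one_sub_exp_ne (a θ : ℝ) (h : Real.sin θ ≠ 0) : 1 - Complex.exp (↑a + ↑θ * I) ≠ 0 := by
  intro h0
  have := norm_one_sub_exp a θ
  rw [h0, norm_zero] at this
  exact h (abs_eq_zero.mp (le_antisymm this (abs_nonneg _)))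

lemma key_alg (n : ℕ) (t ω : ℂ) (ht : t ≠ 0) (hω : ω ≠ 0)
    (h1 : 1 - t * ω⁻¹ ≠ 0) (h2 : 1 - t * ω ≠ 0) (hB : ω ^ n * ω ^ n = 1) :
    (1 / (1 - t * ω⁻¹) - 1 / (1 - t * ω)) * (1 - ω ^ n * (t ^ n)⁻¹) =
      -∑ p ∈ Finset.range n, (ω ^ p - (ω⁻¹) ^ p) * (t⁻¹) ^ p := by
  have hsub1 : ω - t ≠ 0 := by
    intro h
    apply h1
    have : ω = t := by linear_combination h
    rw [this]; field_simp; simp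
  have hq1 : ω * t⁻¹ ≠ 1 := by
    intro h
    apply hsub1
    field_simp at h
    linear_combination h
  have hq2 : ω⁻¹ * t⁻¹ ≠ 1 := by
    intro h
    apply h2
    field_simp at h
    linear_combination h
  have e1 : ∀ p : ℕ, (ω ^ p - (ω⁻¹) ^ p) * (t⁻¹) ^ p
      = (ω * t⁻¹) ^ p - (ω⁻¹ * t⁻¹) ^ p := by
    intro p; rw [mul_pow, mul_pow]; ring
  simp_rw [e1, Finset.sum_sub_distrib, geom_sum_eq hq1, geom_sum_eq hq2]
  have hwn : (ω ^ n)⁻¹ = ω ^ n := by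
    field_simp
    rw [← hB]
    ring
  have htn : (t : ℂ) ^ n ≠ 0 := pow_ne_zero _ ht
  have hWn : (ω : ℂ) ^ n ≠ 0 := pow_ne_zero _ hω
  rw [mul_pow, mul_pow, inv_pow, inv_pow, hwn]
  have r1 : 1 - t * ω⁻¹ = (ω - t) / ω := by field_simp
  have r2 : ω * t⁻¹ - 1 = (ω - t) / t := by field_simp
  have r3 : ω⁻¹ * t⁻¹ - 1 = (1 - t * ω) / (ω * t) := by
    field_simp
  rw [r1, r2, r3]
  have h2' : 1 - ω * t ≠ 0 := by rwa [mul_comm]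
  field_simp
  ring

lemma norm_inv_one_sub_exp_le (a θ : ℝ) (h : Real.sin θ ≠ 0) :
    ‖(1 - Complex.exp (↑a + ↑θ * I))⁻¹‖ ≤ |Real.sin θ|⁻¹ := by
  rw [norm_inv]
  apply inv_anti₀ (abs_pos.mpr h)
  exact norm_one_sub_exp a θ

lemma bracket_cont {θ : ℝ} (h : Real.sin θ ≠ 0) :
    Continuous fun x : ℝ => (1 - Complex.exp (↑(Real.pi * x) + ↑θ * I))⁻¹ := by
  apply Continuous.inv₀
  · exact continuous_const.sub (Complex.continuous_exp.comp
      ((Complex.continuous_ofReal.comp (continuous_const.mul continuous_id)).add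
        continuous_const))
  · intro x
    exact one_sub_exp_ne _ _ h

lemma integrable_main {b : ℂ} (hb : b.re < 0) (c : ℂ) {θ : ℝ} (hθ : Real.sin θ ≠ 0) :
    Integrable fun x : ℝ =>
      ((1 - Complex.exp (↑(Real.pi * x) + ↑(-θ) * I))⁻¹ -
        (1 - Complex.exp (↑(Real.pi * x) + ↑θ * I))⁻¹) * Complex.exp (b * x ^ 2 + c * x) := by
  have hg : Integrable fun x : ℝ => Complex.exp (b * x ^ 2 + c * x) := by
    have := integrable_cexp_quadratic' hb c 0
    simpa using this
  have hθ' : Real.sin (-θ) ≠ 0 := by simpa using hθ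
  refine hg.bdd_mul (c := |Real.sin θ|⁻¹ + |Real.sin θ|⁻¹) ?_ ?_
  · exact ((bracket_cont hθ').sub (bracket_cont hθ)).aestronglyMeasurable
  · refine Filter.Eventually.of_forall fun x => ?_
    refine (norm_sub_le _ _).trans (add_le_add ?_ ?_)
    · have := norm_inv_one_sub_exp_le (Real.pi * x) (-θ) hθ'
      simpa using this
    · exact norm_inv_one_sub_exp_le (Real.pi * x) θ hθ

lemma exp_zpow_neg_one (r : ℤ) : Complex.exp (↑(r:ℤ) * ((Real.pi:ℂ) * I)) = (-1:ℂ) ^ r := by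
  rw [Complex.exp_int_mul, Complex.exp_pi_mul_I]

lemma pointwise_sum (k r : ℤ) (hk : 2 ≤ k) (hr1 : 1 ≤ r) (hr2 : r ≤ k - 1)
    (b cu : ℂ) (x : ℝ) :
    ((1 - Complex.exp (↑(Real.pi * x) + ↑(-(Real.pi * r / k)) * I))⁻¹ -
        (1 - Complex.exp (↑(Real.pi * x) + ↑(Real.pi * r / k) * I))⁻¹) *
        Complex.exp (b * x ^ 2 + cu * x) +
      (-1:ℂ) ^ (r + 1) *
        (((1 - Complex.exp (↑(Real.pi * x) + ↑(-(Real.pi * r / k)) * I))⁻¹ -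
            (1 - Complex.exp (↑(Real.pi * x) + ↑(Real.pi * r / k) * I))⁻¹) *
          Complex.exp (b * x ^ 2 + (cu - ↑Real.pi * ↑k) * x)) =
      ∑ p ∈ Finset.range k.toNat,
        (-(2 * I * ↑(Real.sin (Real.pi * r * p / k)))) *
          Complex.exp (b * x ^ 2 + (cu - ↑Real.pi * ↑p) * x) := by
  have hk0 : (0:ℝ) < (k:ℝ) := by exact_mod_cast lt_of_lt_of_le (by norm_num) hk
  have hkC : (k:ℂ) ≠ 0 := by exact_mod_cast hk0.ne'
  set n : ℕ := k.toNat with hn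
  have hnk : ((n:ℤ)) = k := Int.toNat_of_nonneg (by omega)
  have hnC : ((n:ℂ)) = (k:ℂ) := by exact_mod_cast congrArg (Int.cast : ℤ → ℂ) hnk
  set θ : ℝ := Real.pi * r / k with hθ
  set t : ℂ := Complex.exp (↑(Real.pi * x)) with ht
  set ω : ℂ := Complex.exp (↑θ * I) with hω
  have ht0 : t ≠ 0 := Complex.exp_ne_zero _
  have hω0 : ω ≠ 0 := Complex.exp_ne_zero _
  have hsθ : 0 < Real.sin θ := by
    apply Real.sin_pos_of_pos_of_lt_pi
    · apply div_pos (mul_pos Real.pi_pos (by exact_mod_cast hr1)) hk0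
    · rw [div_lt_iff₀ hk0]
      have : (r:ℝ) < (k:ℝ) := by exact_mod_cast (by omega : r < k)
      nlinarith [Real.pi_pos]
  -- exp rewrites
  have hEneg : Complex.exp (↑(Real.pi * x) + ↑(-θ) * I) = t * ω⁻¹ := by
    rw [← Complex.exp_neg, ← Complex.exp_add]
    congr 1
    push_cast
    ring
  have hEpos : Complex.exp (↑(Real.pi * x) + ↑θ * I) = t * ω := by
    rw [← Complex.exp_add]
  have h1 : 1 - t * ω⁻¹ ≠ 0 := by
    rw [← hEneg]
    exact one_sub_exp_ne _ _ (by simpa using hsθ.ne')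
  have h2 : 1 - t * ω ≠ 0 := by
    rw [← hEpos]
    exact one_sub_exp_ne _ _ hsθ.ne'
  have hωn : ω ^ n = (-1:ℂ) ^ r := by
    rw [hω, ← Complex.exp_nat_mul, ← exp_zpow_neg_one r]
    congr 1
    have : ((θ:ℂ)) = (Real.pi:ℂ) * (r:ℂ) / (k:ℂ) := by
      rw [hθ]; push_cast; ring
    rw [this]
    field_simp
    rw [hnC]
    ring
  have hB : ω ^ n * ω ^ n = 1 := by
    rw [hωn, ← mul_zpow]
    norm_num
  have hσ : ((-1:ℂ)) ^ (r + 1) = -((-1:ℂ) ^ r) := by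
    rw [zpow_add_one₀ (by norm_num)]
    ring
  have htn : t ^ n = Complex.exp ((Real.pi:ℂ) * (k:ℂ) * x) := by
    rw [ht, ← Complex.exp_nat_mul]
    congr 1
    push_cast [← hnC]
    ring
  have hsplit : Complex.exp (b * x ^ 2 + (cu - ↑Real.pi * ↑k) * x) =
      Complex.exp (b * x ^ 2 + cu * x) * (t ^ n)⁻¹ := by
    rw [htn, ← Complex.exp_neg, ← Complex.exp_add]
    congr 1
    push_cast
    ring
  have hcoef : ∀ p : ℕ, ω ^ p - (ω⁻¹) ^ p = 2 * I * ↑(Real.sin (Real.pi * r * p / k)) := by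
    intro p
    have hφ : Real.pi * ↑r * ↑p / ↑k = θ * p := by rw [hθ]; ring
    rw [hφ, hω, ← Complex.exp_neg, ← Complex.exp_nat_mul, ← Complex.exp_nat_mul,
      Complex.ofReal_sin, Complex.sin]
    have e1 : (p:ℂ) * (↑θ * I) = ↑(θ * p) * I := by push_cast; ring
    have e2 : (p:ℂ) * (-(↑θ * I)) = -↑(θ * p) * I := by push_cast; ring
    rw [e1, e2]
    linear_combination (Complex.exp (↑(θ * p) * I) - Complex.exp (-↑(θ * p) * I)) *
      Complex.I_sq
  have hterm : ∀ p : ℕ, (t⁻¹) ^ p * Complex.exp (b * x ^ 2 + cu * x) =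
      Complex.exp (b * x ^ 2 + (cu - ↑Real.pi * ↑p) * x) := by
    intro p
    rw [ht, ← Complex.exp_neg, ← Complex.exp_nat_mul, ← Complex.exp_add]
    congr 1
    push_cast
    ring
  have hkey := key_alg n t ω ht0 hω0 h1 h2 hB
  simp only [one_div] at hkey
  rw [hEneg, hEpos, hsplit, hσ]
  calc ((1 - t * ω⁻¹)⁻¹ - (1 - t * ω)⁻¹) * Complex.exp (b * x ^ 2 + cu * x) +
        -((-1:ℂ) ^ r) * (((1 - t * ω⁻¹)⁻¹ - (1 - t * ω)⁻¹) *
          (Complex.exp (b * x ^ 2 + cu * x) * (t ^ n)⁻¹))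
      = (((1 - t * ω⁻¹)⁻¹ - (1 - t * ω)⁻¹) * (1 - ω ^ n * (t ^ n)⁻¹)) *
          Complex.exp (b * x ^ 2 + cu * x) := by rw [hωn]; ring
    _ = (-∑ p ∈ Finset.range n, (ω ^ p - (ω⁻¹) ^ p) * (t⁻¹) ^ p) *
          Complex.exp (b * x ^ 2 + cu * x) := by rw [hkey]
    _ = ∑ p ∈ Finset.range n,
          (-(2 * I * ↑(Real.sin (Real.pi * r * p / k)))) *
            Complex.exp (b * x ^ 2 + (cu - ↑Real.pi * ↑p) * x) := by
        rw [neg_mul, Finset.sum_mul, ← Finset.sum_neg_distrib]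
        refine Finset.sum_congr rfl fun p _ => ?_
        rw [← hcoef p, ← hterm p]
        ring

lemma integrable_g {b : ℂ} (hb : b.re < 0) (c : ℂ) :
    Integrable fun x : ℝ => Complex.exp (b * x ^ 2 + c * x) := by
  simpa using integrable_cexp_quadratic' hb c 0

lemma integral_g {b : ℂ} (hb : b.re < 0) (c : ℂ) :
    ∫ x : ℝ, Complex.exp (b * x ^ 2 + c * x) =
      (↑Real.pi / -b) ^ ((1:ℂ)/2) * Complex.exp (-(c ^ 2 / (4 * b))) := by
  have h := integral_cexp_quadratic hb c 0
  simpa [zero_sub] using h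

lemma sum_Icc_eq_range (k : ℤ) (hk : 2 ≤ k) (F : ℤ → ℂ) (h0 : F 0 = 0) :
    ∑ p ∈ Finset.Icc (1:ℤ) (k-1), F p = ∑ p ∈ Finset.range k.toNat, F ↑p := by
  have h2 : ∑ p ∈ Finset.Icc (1:ℤ) (k-1), F p = ∑ p ∈ Finset.Icc (0:ℤ) (k-1), F p := by
    refine Finset.sum_subset (Finset.Icc_subset_Icc (by norm_num) le_rfl) ?_
    intro x hx hnx
    rw [Finset.mem_Icc] at hx
    rw [Finset.mem_Icc] at hnx
    push_neg at hnx
    have : x = 0 := by omega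
    rw [this, h0]
  rw [h2]
  refine Finset.sum_nbij' (fun p => p.toNat) (fun q => (q : ℤ)) ?_ ?_ ?_ ?_ ?_ <;>
      intro a ha <;>
      simp only [Finset.mem_Icc, Finset.mem_range] at ha ⊢
  · omega
  · omega
  · omega
  · omega
  · congr 1
    omega

set_option maxHeartbeats 2000000 in
/-- Proposition: ĥ_{k,r}(τ; u) + (−1)^(r+1) ĥ_{k,r}(τ; u+1)
    = (2/√(−iτ)) Σ_{p=1}^{k−1} Ŝ^{(k)}_{r,p} e^{iπk(u+p/k)²/(2τ)}. -/
theorem hhat_shift_one (k : ℤ) (hk : 2 ≤ k) (r : ℤ) (hr1 : 1 ≤ r) (hr2 : r ≤ k - 1)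
    (τ : ℂ) (hτ : 0 < τ.im) (u : ℂ) :
    hhat k r τ u + (-1 : ℂ) ^ (r + 1) * hhat k r τ (u + 1) =
      2 / ((-Complex.I * τ) ^ ((1 : ℂ) / 2)) *
        ∑ p ∈ Finset.Icc (1 : ℤ) (k - 1),
          Shat k r p *
            Complex.exp ((Real.pi : ℂ) * Complex.I * (k : ℂ) * (u + (p : ℂ) / (k : ℂ)) ^ 2 /
              (2 * τ)) := by
  have hk0R : (0:ℝ) < (k:ℝ) := by exact_mod_cast lt_of_lt_of_le (by norm_num) hk
  have hkC : (k:ℂ) ≠ 0 := by exact_mod_cast hk0R.ne'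
  have hτ0 : τ ≠ 0 := by
    intro h
    rw [h] at hτ
    simp at hτ
  have hθne : Real.sin (Real.pi * r / k) ≠ 0 := by
    have h : 0 < Real.sin (Real.pi * r / k) := by
      apply Real.sin_pos_of_pos_of_lt_pi
      · exact div_pos (mul_pos Real.pi_pos (by exact_mod_cast hr1)) hk0R
      · rw [div_lt_iff₀ hk0R]
        have : (r:ℝ) < (k:ℝ) := by exact_mod_cast (by omega : r < k)
        nlinarith [Real.pi_pos]
    exact h.ne'
  set b : ℂ := ↑Real.pi * I * ↑k * τ / 2 with hbdef
  have hbre : b.re < 0 := by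
    have hb2 : b = ((Real.pi * k / 2 : ℝ) : ℂ) * (τ * I) := by rw [hbdef]; push_cast; ring
    rw [hb2, Complex.re_ofReal_mul, Complex.mul_I_re]
    have h1 : 0 < Real.pi * k / 2 := by positivity
    nlinarith [hτ]
  have hfun : ∀ v : ℂ,
      (fun x : ℝ => Complex.exp ((Real.pi : ℂ) * I * (k:ℂ) * τ * (x:ℂ) ^ 2 / 2) *
        Complex.exp (-(Real.pi : ℂ) * (k:ℂ) * v * (x:ℂ)) *
        (1 / (1 - Complex.exp ((Real.pi : ℂ) * (x:ℂ) - (Real.pi : ℂ) * I * (r:ℂ) / (k:ℂ))) -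
          1 / (1 - Complex.exp ((Real.pi : ℂ) * (x:ℂ) + (Real.pi : ℂ) * I * (r:ℂ) / (k:ℂ)))))
      = fun x : ℝ =>
        ((1 - Complex.exp (↑(Real.pi * x) + ↑(-(Real.pi * r / k)) * I))⁻¹ -
          (1 - Complex.exp (↑(Real.pi * x) + ↑(Real.pi * r / k) * I))⁻¹) *
          Complex.exp (b * x ^ 2 + (-(↑Real.pi * ↑k * v)) * x) := by
    intro v
    funext x
    have e1 : (Real.pi : ℂ) * (x:ℂ) - (Real.pi : ℂ) * I * (r:ℂ) / (k:ℂ)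
        = ↑(Real.pi * x) + ↑(-(Real.pi * r / k)) * I := by
      push_cast
      ring
    have e2 : (Real.pi : ℂ) * (x:ℂ) + (Real.pi : ℂ) * I * (r:ℂ) / (k:ℂ)
        = ↑(Real.pi * x) + ↑(Real.pi * r / k) * I := by
      push_cast
      ring
    have e3 : (Real.pi : ℂ) * I * (k:ℂ) * τ * (x:ℂ) ^ 2 / 2 + -(Real.pi : ℂ) * (k:ℂ) * v * (x:ℂ)
        = b * (x:ℂ) ^ 2 + (-(↑Real.pi * ↑k * v)) * (x:ℂ) := by
      rw [hbdef]; ring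
    rw [e1, e2, one_div, one_div, ← Complex.exp_add, e3]
    ring
  rw [hhat, hhat, hfun u, hfun (u+1)]
  have hcu1 : (-(↑Real.pi * ↑k * (u+1)) : ℂ) = -(↑Real.pi * ↑k * u) - ↑Real.pi * ↑k := by ring
  simp_rw [hcu1]
  have hi1 : Integrable fun x : ℝ =>
      ((1 - Complex.exp (↑(Real.pi * x) + ↑(-(Real.pi * r / k)) * I))⁻¹ -
        (1 - Complex.exp (↑(Real.pi * x) + ↑(Real.pi * r / k) * I))⁻¹) *
        Complex.exp (b * x ^ 2 + (-(↑Real.pi * ↑k * u)) * x) := integrable_main hbre _ hθne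
  have hi2 : Integrable fun x : ℝ =>
      ((1 - Complex.exp (↑(Real.pi * x) + ↑(-(Real.pi * r / k)) * I))⁻¹ -
        (1 - Complex.exp (↑(Real.pi * x) + ↑(Real.pi * r / k) * I))⁻¹) *
        Complex.exp (b * x ^ 2 + (-(↑Real.pi * ↑k * u) - ↑Real.pi * ↑k) * x) :=
    integrable_main hbre _ hθne
  rw [show ∀ A B : ℂ, I * A + (-1:ℂ)^(r+1) * (I * B) = I * (A + (-1:ℂ)^(r+1) * B) from
    fun A B => by ring]
  rw [← MeasureTheory.integral_const_mul, ← MeasureTheory.integral_add hi1 (hi2.const_mul _)]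
  have hpt : (fun x : ℝ =>
      ((1 - Complex.exp (↑(Real.pi * x) + ↑(-(Real.pi * r / k)) * I))⁻¹ -
        (1 - Complex.exp (↑(Real.pi * x) + ↑(Real.pi * r / k) * I))⁻¹) *
        Complex.exp (b * x ^ 2 + (-(↑Real.pi * ↑k * u)) * x) +
      (-1:ℂ)^(r+1) * (((1 - Complex.exp (↑(Real.pi * x) + ↑(-(Real.pi * r / k)) * I))⁻¹ -
        (1 - Complex.exp (↑(Real.pi * x) + ↑(Real.pi * r / k) * I))⁻¹) *
        Complex.exp (b * x ^ 2 + (-(↑Real.pi * ↑k * u) - ↑Real.pi * ↑k) * x)))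
      = fun x : ℝ => ∑ p ∈ Finset.range k.toNat,
          (-(2 * I * ↑(Real.sin (Real.pi * r * p / k)))) *
            Complex.exp (b * x ^ 2 + ((-(↑Real.pi * ↑k * u)) - ↑Real.pi * ↑p) * x) := by
    funext x
    with_reducible exact pointwise_sum k r hk hr1 hr2 b (-(↑Real.pi * ↑k * u)) x
  rw [hpt]
  rw [MeasureTheory.integral_finset_sum _ (fun p _ => ((integrable_g hbre _).const_mul _))]
  simp_rw [MeasureTheory.integral_const_mul, integral_g hbre]
  rw [sum_Icc_eq_range k hk (fun p => Shat k r p *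
    Complex.exp ((Real.pi : ℂ) * I * (k:ℂ) * (u + (p:ℂ)/(k:ℂ)) ^ 2 / (2*τ)))
    (by simp [Shat])]
  rw [Finset.mul_sum, Finset.mul_sum]
  refine Finset.sum_congr rfl fun p hp => ?_
  -- per-term identity
  have hmz : (-I*τ) ≠ 0 := mul_ne_zero (neg_ne_zero.mpr Complex.I_ne_zero) hτ0
  have hw : (-(↑Real.pi * ↑k * u) - ↑Real.pi * ↑p : ℂ)
      = -(↑Real.pi * ↑k * (u + (p:ℂ)/(k:ℂ))) := by
    field_simp
    ring
  have hπC : (Real.pi : ℂ) ≠ 0 := Complex.ofReal_ne_zero.mpr Real.pi_ne_zero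
  have hbne : b ≠ 0 := by
    rw [hbdef]
    exact div_ne_zero (mul_ne_zero (mul_ne_zero (mul_ne_zero hπC Complex.I_ne_zero) hkC) hτ0)
      two_ne_zero
  have hexp : -((-(↑Real.pi * ↑k * (u + (p:ℂ)/(k:ℂ))))^2/(4*b))
      = (Real.pi : ℂ) * I * (k:ℂ) * (u + (p:ℂ)/(k:ℂ)) ^ 2 / (2*τ) := by
    rw [← neg_div, div_eq_div_iff (by norm_num [hbne] : (4:ℂ)*b ≠ 0)
      (by exact mul_ne_zero two_ne_zero hτ0), hbdef]
    linear_combination (-2*(Real.pi:ℂ)^2*(k:ℂ)^2*τ*(u + (p:ℂ)/(k:ℂ))^2) * Complex.I_sq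
  have harg : (-I*τ).arg ≠ Real.pi := by
    rw [Ne, Complex.arg_eq_pi_iff]
    push_neg
    intro hre
    exfalso
    have hre2 : (-I*τ).re = τ.im := by simp
    linarith [hre, hre2 ▸ hre]
  have hpre : ((Real.pi : ℂ) / -b)^((1:ℂ)/2)
      = ↑(Real.sqrt (2/(k:ℝ))) * (((-I*τ))^((1:ℂ)/2))⁻¹ := by
    have h1 : (Real.pi : ℂ) / -b = (((2:ℝ)/(k:ℝ) : ℝ):ℂ) * (-I*τ)⁻¹ := by
      rw [div_eq_iff (neg_ne_zero.mpr hbne), hbdef]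
      push_cast
      field_simp
    rw [h1, cpow_real_mul (by positivity) (inv_ne_zero hmz), Complex.inv_cpow _ _ harg]
  have hShat : Shat k r ((p:ℕ):ℤ) = ↑(Real.sqrt (2/(k:ℝ))) * ↑(Real.sin (Real.pi * r * p / k)) := by
    rw [Shat]
    push_cast
    ring
  rw [hw, hexp, hpre, hShat]
  linear_combination (-2*(Real.sin (Real.pi * r * p / k):ℂ)*(Real.sqrt (2/(k:ℝ)):ℂ)*
    (((-I*τ))^((1:ℂ)/2))⁻¹*Complex.exp ((Real.pi : ℂ) * I * (k:ℂ) *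
      (u + (p:ℂ)/(k:ℂ)) ^ 2 / (2*τ))) * Complex.I_sq

end DSLST
end
end

section
/- For every integer k ≥ 2, every r ∈ {1, …, k−1}, every τ in the upper half-plane and every u ∈ ℂ, one has ĥ_{k,r}(τ; u) + e^{−πiku − πikτ/2} · ĥ_{k,k−r}(τ; u+τ) = 2 e^{−πiru − πir²τ/(2k)}. Moreover ĥ_{k,r}(τ; u) = ĥ_{k,r}(τ; −u) for all u ∈ ℂ. -/
noncomputable section

open Complex MeasureTheory Matrix

namespace DHaux

open Complex MeasureTheory Filter Topology Set intervalIntegral Interval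


lemma exp_ne_one_of_sin_im {a : ℂ} (h : Real.sin a.im ≠ 0) : Complex.exp a ≠ 1 := by
  intro hh
  have h2 := congrArg Complex.im hh
  rw [Complex.exp_im] at h2
  simp only [Complex.one_im] at h2
  rcases mul_eq_zero.mp h2 with h3 | h3
  · exact (Real.exp_pos a.re).ne' h3
  · exact h h3

lemma norm_exp' (a : ℂ) : ‖Complex.exp a‖ = Real.exp a.re := by
  rw [Complex.norm_exp]

lemma norm_one_sub_exp_ge (ρ φ : ℝ) :
    min (1/2) (|Real.sin φ|/2) ≤ ‖1 - Complex.exp (↑ρ + ↑φ * I)‖ := by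
  have him : (Complex.exp ((ρ:ℂ) + ↑φ * I)).im = Real.exp ρ * Real.sin φ := by
    rw [Complex.exp_im]; simp
  rcases le_or_gt (Real.exp ρ) (1/2) with h | h
  · have h1 : ‖Complex.exp ((ρ:ℂ) + ↑φ * I)‖ = Real.exp ρ := by
      rw [norm_exp']; simp
    calc min (1/2) (|Real.sin φ|/2) ≤ 1/2 := min_le_left _ _
      _ ≤ ‖(1:ℂ)‖ - ‖Complex.exp ((ρ:ℂ) + ↑φ * I)‖ := by rw [h1]; simp; linarith
      _ ≤ ‖1 - Complex.exp ((ρ:ℂ) + ↑φ * I)‖ := norm_sub_norm_le _ _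
  · calc min (1/2) (|Real.sin φ|/2) ≤ |Real.sin φ|/2 := min_le_right _ _
      _ ≤ Real.exp ρ * |Real.sin φ| := by nlinarith [abs_nonneg (Real.sin φ)]
      _ = |(1 - Complex.exp ((ρ:ℂ) + ↑φ * I)).im| := by
          rw [Complex.sub_im, him, Complex.one_im, zero_sub, abs_neg, abs_mul,
            abs_of_pos (Real.exp_pos ρ)]
      _ ≤ ‖1 - Complex.exp ((ρ:ℂ) + ↑φ * I)‖ := Complex.abs_im_le_norm _
      _ = ‖1 - Complex.exp ((ρ:ℂ) + ↑φ * I)‖ := rfl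

lemma one_div_one_sub_exp_neg {a : ℂ} (h : Complex.exp a ≠ 1) :
    1 / (1 - Complex.exp (-a)) = 1 - 1 / (1 - Complex.exp a) := by
  have h0 : Complex.exp a ≠ 0 := Complex.exp_ne_zero a
  have h1 : (1:ℂ) - Complex.exp a ≠ 0 := sub_ne_zero.mpr (Ne.symm h)
  have h2 : (1:ℂ) - Complex.exp (-a) ≠ 0 := by
    rw [Complex.exp_neg]
    intro hh
    exact h (inv_eq_one.mp (sub_eq_zero.mp hh).symm)
  have h3 : (-1 : ℂ) + Complex.exp a ≠ 0 := by
    intro hh; exact h1 (by linear_combination -hh)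
  rw [Complex.exp_neg] at h2 ⊢
  field_simp
  have h4 : Complex.exp a - 1 ≠ 0 := by
    intro hh; exact h3 (by linear_combination hh)
  ring

lemma quad_tendsto {a : ℝ} (ha : a < 0) (b c : ℝ) :
    Tendsto (fun X : ℝ => Real.exp (a*X^2 + b*X + c)) atTop (𝓝 0) := by
  apply Real.tendsto_exp_atBot.comp
  have h1 : Tendsto (fun X : ℝ => a*X + b) atTop atBot :=
    tendsto_atBot_add_const_right _ b (tendsto_const_mul_atBot_of_neg ha |>.mpr tendsto_id)
  have h2 : Tendsto (fun X : ℝ => X * (a*X+b) + c) atTop atBot :=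
    tendsto_atBot_add_const_right _ c (Tendsto.atTop_mul_atBot₀ tendsto_id h1)
  refine h2.congr fun X => by ring




def z0 (θ : ℝ) : ℂ := ((θ / Real.pi : ℝ) : ℂ) * I

def Hh (β γ : ℂ) (z : ℂ) : ℂ := Complex.exp (β*z^2 + γ*z)

def Ee (β γ : ℂ) (θ : ℝ) : ℂ := Hh β γ (z0 θ)

def d1 (θ : ℝ) (z : ℂ) : ℂ := Complex.exp ((Real.pi:ℂ)*z - (θ:ℂ)*I)

def d2 (θ : ℝ) (z : ℂ) : ℂ := Complex.exp ((Real.pi:ℂ)*z + (θ:ℂ)*I)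

def Ff (β γ : ℂ) (θ : ℝ) (z : ℂ) : ℂ := Hh β γ z * (1/(1 - d1 θ z) - 1/(1 - d2 θ z))

def cmp (β γ : ℂ) (θ : ℝ) (z : ℂ) : ℂ := Ee β γ θ / (1 - d1 θ z)

def FC (β γ : ℂ) (θ : ℝ) (z : ℂ) : ℂ := Ff β γ θ z - cmp β γ θ z

def Gg (β γ : ℂ) (θ : ℝ) : ℂ → ℂ :=
  Function.update (FC β γ θ) (z0 θ) (limUnder (𝓝[≠] (z0 θ)) (FC β γ θ))

def Aa (β γ : ℂ) (θ : ℝ) (x : ℝ) : ℂ :=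
  (Ee β γ θ / Real.pi) * (Complex.log (1 + d1 θ x) - Complex.log (1 - d1 θ x))

section Class

variable {θ : ℝ} (hθ0 : 0 < θ) (hθπ : θ < Real.pi)
include hθ0 hθπ

omit hθ0 hθπ in
lemma z0_re : (z0 θ).re = 0 := by simp [z0]
omit hθ0 hθπ in
lemma z0_im : (z0 θ).im = θ / Real.pi := by simp [z0]

lemma d1_eq_one {z : ℂ} (h0 : 0 ≤ z.im) (h1 : z.im ≤ 1) (h : d1 θ z = 1) : z = z0 θ := by
  rw [d1, Complex.exp_eq_one_iff] at h
  obtain ⟨n, hn⟩ := h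
  have hre := congrArg Complex.re hn
  have him := congrArg Complex.im hn
  simp [Complex.mul_re, Complex.mul_im] at hre him
  -- hre : Real.pi * z.re = 0 (hopefully), him : Real.pi * z.im - θ = n * (2 * Real.pi)
  have hπ := Real.pi_pos
  have hzre : z.re = 0 := by
    simpa using hre
  have htp0 : 0 < θ / Real.pi := div_pos hθ0 hπ
  have htp1 : θ / Real.pi < 1 := (div_lt_one hπ).mpr hθπ
  have hzim : z.im = 2*(n:ℝ) + θ / Real.pi := by field_simp; linarith [him]
  have hn0 : n = 0 := by
    have hc1 : (n:ℝ) < 1 := by nlinarith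
    have hc2 : (-1:ℝ) < n := by nlinarith
    have h1' : n < 1 := by exact_mod_cast hc1
    have h2' : (-1:ℤ) < n := by exact_mod_cast hc2
    omega
  subst hn0
  apply Complex.ext
  · rw [hzre, z0_re]
  · rw [hzim, z0_im]; push_cast; ring

lemma d2_ne_one {z : ℂ} (h0 : 0 ≤ z.im) (h1 : z.im ≤ 1) : d2 θ z ≠ 1 := by
  intro h
  rw [d2, Complex.exp_eq_one_iff] at h
  obtain ⟨n, hn⟩ := h
  have him := congrArg Complex.im hn
  simp [Complex.mul_re, Complex.mul_im] at him
  -- him : Real.pi * z.im + θ = n * (2 * Real.pi)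
  have hπ := Real.pi_pos
  have htp0 : 0 < θ / Real.pi := div_pos hθ0 hπ
  have htp1 : θ / Real.pi < 1 := (div_lt_one hπ).mpr hθπ
  have hzim : z.im = 2*(n:ℝ) - θ / Real.pi := by field_simp; linarith [him]
  have hn1 : (0:ℝ) < (n:ℝ) := by nlinarith
  have hn1' : 0 < n := by exact_mod_cast hn1
  have hn2 : (1:ℝ) ≤ (n:ℝ) := by exact_mod_cast hn1'
  nlinarith

lemma one_sub_d1_ne {z : ℂ} (h0 : 0 ≤ z.im) (h1 : z.im ≤ 1) (hz : z ≠ z0 θ) :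
    (1:ℂ) - d1 θ z ≠ 0 := by
  intro h
  exact hz (d1_eq_one hθ0 hθπ h0 h1 (by linear_combination -h))

lemma one_sub_d2_ne {z : ℂ} (h0 : 0 ≤ z.im) (h1 : z.im ≤ 1) :
    (1:ℂ) - d2 θ z ≠ 0 := by
  intro h
  exact d2_ne_one hθ0 hθπ h0 h1 (by linear_combination -h)

-- line lower bounds
lemma lb_d1_line (x y : ℝ) (hy : y = 0 ∨ y = 1) :
    min (1/2) (Real.sin θ/2) ≤ ‖1 - d1 θ (↑x + ↑y*I)‖ := by
  have hs : 0 < Real.sin θ := Real.sin_pos_of_pos_of_lt_pi hθ0 hθπ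
  have he : d1 θ (↑x+↑y*I) = Complex.exp (↑(Real.pi*x) + ↑(Real.pi*y - θ)*I) := by
    rw [d1]; congr 1; push_cast; ring
  rw [he]
  have hb := norm_one_sub_exp_ge (Real.pi*x) (Real.pi*y - θ)
  have habs : |Real.sin (Real.pi*y - θ)| = Real.sin θ := by
    rcases hy with rfl | rfl
    · simp [abs_of_pos hs]
    · rw [mul_one, Real.sin_pi_sub, abs_of_pos hs]
  rwa [habs] at hb

lemma lb_d2_line (x y : ℝ) (hy : y = 0 ∨ y = 1) :
    min (1/2) (Real.sin θ/2) ≤ ‖1 - d2 θ (↑x + ↑y*I)‖ := by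
  have hs : 0 < Real.sin θ := Real.sin_pos_of_pos_of_lt_pi hθ0 hθπ
  have he : d2 θ (↑x+↑y*I) = Complex.exp (↑(Real.pi*x) + ↑(Real.pi*y + θ)*I) := by
    rw [d2]; congr 1; push_cast; ring
  rw [he]
  have hb := norm_one_sub_exp_ge (Real.pi*x) (Real.pi*y + θ)
  have habs : |Real.sin (Real.pi*y + θ)| = Real.sin θ := by
    rcases hy with rfl | rfl
    · simp [abs_of_pos hs]
    · rw [mul_one, show Real.pi + θ = θ + Real.pi by ring, Real.sin_add_pi, abs_neg, abs_of_pos hs]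
  rwa [habs] at hb

omit hθ0 hθπ in
lemma min_pos (hs : 0 < Real.sin θ) : (0:ℝ) < min (1/2) (Real.sin θ/2) :=
  lt_min (by norm_num) (by linarith)

omit hθ0 hθπ in
lemma ne_of_lb {w : ℂ} {m : ℝ} (hm : 0 < m) (h : m ≤ ‖w‖) : w ≠ 0 := by
  intro hw; rw [hw, norm_zero] at h; linarith

end Class

section Diff
variable (β γ : ℂ) (θ : ℝ)

lemma diff_Hh : Differentiable ℂ (Hh β γ) := by unfold Hh; fun_prop
lemma diff_d1 : Differentiable ℂ (d1 θ) := by unfold d1; fun_prop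
lemma diff_d2 : Differentiable ℂ (d2 θ) := by unfold d2; fun_prop

lemma diffAt_Ff {z : ℂ} (h1 : (1:ℂ) - d1 θ z ≠ 0) (h2 : (1:ℂ) - d2 θ z ≠ 0) :
    DifferentiableAt ℂ (Ff β γ θ) z := by
  unfold Ff
  exact ((diff_Hh β γ) z).mul
    (((differentiableAt_const 1).div ((differentiableAt_const 1).sub ((diff_d1 θ) z)) h1).sub
     ((differentiableAt_const 1).div ((differentiableAt_const 1).sub ((diff_d2 θ) z)) h2))

lemma diffAt_cmp {z : ℂ} (h1 : (1:ℂ) - d1 θ z ≠ 0) :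
    DifferentiableAt ℂ (cmp β γ θ) z := by
  unfold cmp
  exact (differentiableAt_const _).div ((differentiableAt_const 1).sub ((diff_d1 θ) z)) h1

lemma cont_Ff_line (y : ℝ) (h1 : ∀ x:ℝ, (1:ℂ) - d1 θ (↑x+↑y*I) ≠ 0)
    (h2 : ∀ x:ℝ, (1:ℂ) - d2 θ (↑x+↑y*I) ≠ 0) :
    Continuous fun x:ℝ => Ff β γ θ (↑x + ↑y*I) := by
  have c1 : Continuous fun x:ℝ => d1 θ (↑x+↑y*I) := by unfold d1; fun_prop
  have c2 : Continuous fun x:ℝ => d2 θ (↑x+↑y*I) := by unfold d2; fun_prop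
  have cH : Continuous fun x:ℝ => Hh β γ (↑x+↑y*I) := by unfold Hh; fun_prop
  unfold Ff
  exact cH.mul ((continuous_const.div (continuous_const.sub c1) h1).sub
    (continuous_const.div (continuous_const.sub c2) h2))

lemma cont_cmp_line (y : ℝ) (h1 : ∀ x:ℝ, (1:ℂ) - d1 θ (↑x+↑y*I) ≠ 0) :
    Continuous fun x:ℝ => cmp β γ θ (↑x + ↑y*I) := by
  have c1 : Continuous fun x:ℝ => d1 θ (↑x+↑y*I) := by unfold d1; fun_prop
  unfold cmp
  exact continuous_const.div (continuous_const.sub c1) h1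

end Diff

section Lines
variable (β γ : ℂ) {θ : ℝ} (hθ0 : 0 < θ) (hθπ : θ < Real.pi)
include hθ0 hθπ

lemma line_ne_d1 (y : ℝ) (hy : y = 0 ∨ y = 1) : ∀ x:ℝ, (1:ℂ) - d1 θ (↑x+↑y*I) ≠ 0 :=
  fun x => ne_of_lb (min_pos (Real.sin_pos_of_pos_of_lt_pi hθ0 hθπ)) (lb_d1_line hθ0 hθπ x y hy)

lemma line_ne_d2 (y : ℝ) (hy : y = 0 ∨ y = 1) : ∀ x:ℝ, (1:ℂ) - d2 θ (↑x+↑y*I) ≠ 0 :=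
  fun x => ne_of_lb (min_pos (Real.sin_pos_of_pos_of_lt_pi hθ0 hθπ)) (lb_d2_line hθ0 hθπ x y hy)

lemma integrable_Ff_line (hβ : β.re < 0) (y : ℝ) (hy : y = 0 ∨ y = 1) :
    Integrable (fun x:ℝ => Ff β γ θ (↑x + ↑y*I)) := by
  have hs := Real.sin_pos_of_pos_of_lt_pi hθ0 hθπ
  set m := min (1/2 : ℝ) (Real.sin θ/2) with hmdef
  have hm0 : 0 < m := min_pos hs
  have h1 := line_ne_d1 hθ0 hθπ y hy
  have h2 := line_ne_d2 hθ0 hθπ y hy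
  have hint : Integrable (fun x:ℝ =>
      (2/m) * ‖Complex.exp (β*(x:ℂ)^2 + (2*β*↑y*I+γ)*↑x + (β*(↑y*I)^2+γ*(↑y*I)))‖) :=
    ((integrable_cexp_quadratic' hβ _ _).norm.const_mul _)
  refine hint.mono' ((cont_Ff_line β γ θ y h1 h2).aestronglyMeasurable) (ae_of_all _ fun x => ?_)
  have hH : Hh β γ (↑x+↑y*I) = Complex.exp (β*(x:ℂ)^2 + (2*β*↑y*I+γ)*↑x + (β*(↑y*I)^2+γ*(↑y*I))) := by
    unfold Hh; congr 1; ring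
  have hb1 : ‖1/(1 - d1 θ (↑x+↑y*I))‖ ≤ 1/m := by
    rw [norm_div, norm_one]
    exact one_div_le_one_div_of_le hm0 (lb_d1_line hθ0 hθπ x y hy)
  have hb2 : ‖1/(1 - d2 θ (↑x+↑y*I))‖ ≤ 1/m := by
    rw [norm_div, norm_one]
    exact one_div_le_one_div_of_le hm0 (lb_d2_line hθ0 hθπ x y hy)
  calc ‖Ff β γ θ (↑x+↑y*I)‖
      = ‖Hh β γ (↑x+↑y*I)‖ * ‖1/(1-d1 θ (↑x+↑y*I)) - 1/(1-d2 θ (↑x+↑y*I))‖ := by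
        unfold Ff; rw [norm_mul]
    _ ≤ ‖Hh β γ (↑x+↑y*I)‖ * (1/m + 1/m) :=
        mul_le_mul_of_nonneg_left ((norm_sub_le _ _).trans (add_le_add hb1 hb2)) (norm_nonneg _)
    _ = (2/m) * ‖Complex.exp (β*(x:ℂ)^2 + (2*β*↑y*I+γ)*↑x + (β*(↑y*I)^2+γ*(↑y*I)))‖ := by
        rw [hH]; ring

end Lines

section Side
variable (β γ : ℂ) (θ : ℝ)

lemma norm_Hh_side (σ y : ℝ) (hy0 : 0 ≤ y) (hy1 : y ≤ 1) :
    ‖Hh β γ (↑σ + ↑y*I)‖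
      ≤ Real.exp (β.re*σ^2 + (2*|β.im|+|γ.re|) * |σ| + (|β.re|+|γ.im|)) := by
  unfold Hh
  rw [norm_exp']
  apply Real.exp_le_exp.mpr
  have hre : (β*((σ:ℂ)+(y:ℂ)*I)^2 + γ*((σ:ℂ)+(y:ℂ)*I)).re
      = β.re*(σ^2-y^2) - β.im*(2*σ*y) + (γ.re*σ - γ.im*y) := by
    simp only [pow_two, Complex.add_re, Complex.add_im, Complex.mul_re, Complex.mul_im,
      Complex.ofReal_re, Complex.ofReal_im, Complex.I_re, Complex.I_im]
    ring
  rw [hre, show (2*|β.im|+|γ.re|) * |σ| = 2 * |β.im| * |σ| + |γ.re| * |σ| from by ring]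
  have hy2 : y^2 ≤ 1 := by nlinarith
  have hyabs : |y| ≤ 1 := abs_le.mpr ⟨by linarith, hy1⟩
  have k1a : -β.re * y^2 ≤ |β.re| * y^2 :=
    mul_le_mul_of_nonneg_right (by linarith [neg_abs_le β.re]) (sq_nonneg y)
  have k1b : |β.re| * y^2 ≤ |β.re| * 1 := mul_le_mul_of_nonneg_left hy2 (abs_nonneg _)
  have e1 : β.re*(σ^2-y^2) ≤ β.re*σ^2 + |β.re| := by nlinarith [k1a, k1b]
  have k2 : -(β.im*(2*σ*y)) ≤ 2 * |β.im| * |σ| := by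
    have ha : -(β.im*(2*σ*y)) ≤ |β.im*(2*σ*y)| := by
      have := neg_abs_le (β.im*(2*σ*y)); linarith [le_abs_self (β.im*(2*σ*y))]
    have habs : |β.im*(2*σ*y)| = 2 * (|β.im| * (|σ| * |y|)) := by
      rw [abs_mul, abs_mul, abs_mul]
      rw [show |(2:ℝ)| = 2 from by norm_num]
      ring
    have k2c : |β.im| * (|σ| * |y|) ≤ |β.im| * (|σ| * 1) :=
      mul_le_mul_of_nonneg_left (mul_le_mul_of_nonneg_left hyabs (abs_nonneg σ)) (abs_nonneg _)
    nlinarith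
  have k3 : γ.re*σ ≤ |γ.re| * |σ| := by
    calc γ.re*σ ≤ |γ.re*σ| := le_abs_self _
      _ = |γ.re| * |σ| := abs_mul _ _
  have k4 : -(γ.im*y) ≤ |γ.im| := by
    have ha : -(γ.im*y) ≤ |γ.im*y| := by
      have := neg_abs_le (γ.im*y); linarith [le_abs_self (γ.im*y)]
    have habs : |γ.im*y| = |γ.im| * |y| := abs_mul _ _
    nlinarith [abs_nonneg γ.im]
  linarith

lemma inv_one_sub_le_hi {w : ℂ} (h : 2 ≤ ‖w‖) : ‖1/(1-w)‖ ≤ 2 := by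
  have h1 : (1:ℝ) ≤ ‖1-w‖ := by
    have h2 := norm_sub_norm_le w 1
    rw [norm_one] at h2
    rw [norm_sub_rev]
    linarith
  rw [norm_div, norm_one]
  rw [div_le_iff₀ (by linarith)]
  linarith

lemma inv_one_sub_le_lo {w : ℂ} (h : ‖w‖ ≤ 1/2) : ‖1/(1-w)‖ ≤ 2 := by
  have h1 : (1/2:ℝ) ≤ ‖1-w‖ := by
    have h2 := norm_sub_norm_le (1:ℂ) w
    rw [norm_one] at h2
    linarith
  rw [norm_div, norm_one]
  rw [div_le_iff₀ (by linarith)]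
  linarith

lemma norm_d1_pt (z : ℂ) : ‖d1 θ z‖ = Real.exp (Real.pi * z.re) := by
  rw [d1, norm_exp']
  simp

lemma norm_d2_pt (z : ℂ) : ‖d2 θ z‖ = Real.exp (Real.pi * z.re) := by
  rw [d2, norm_exp']
  simp

lemma exp_pi_bounds (σ : ℝ) (hσ : 1 ≤ |σ|) :
    (2 ≤ Real.exp (Real.pi*σ) ∧ 1 ≤ σ) ∨ (Real.exp (Real.pi*σ) ≤ 1/2 ∧ σ ≤ -1) := by
  have hπ := Real.pi_gt_three
  rcases le_abs.mp hσ with h | h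
  · left
    refine ⟨?_, h⟩
    have := Real.add_one_le_exp (Real.pi*σ)
    nlinarith
  · right
    have hσ' : σ ≤ -1 := by linarith
    refine ⟨?_, hσ'⟩
    have h1 : Real.exp (Real.pi*σ) ≤ Real.exp (-3) := by
      apply Real.exp_le_exp.mpr; nlinarith
    have h2 : Real.exp (-3) ≤ 1/2 := by
      rw [Real.exp_neg]
      rw [inv_le_comm₀ (Real.exp_pos 3) (by norm_num)]
      have := Real.add_one_le_exp (3:ℝ)
      linarith
    linarith

lemma norm_brk_side (σ y : ℝ) (hσ : 1 ≤ |σ|) :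
    ‖1/(1 - d1 θ ((σ:ℂ)+↑y*I)) - 1/(1 - d2 θ ((σ:ℂ)+↑y*I))‖ ≤ 4 := by
  have hre : ((σ:ℂ)+↑y*I).re = σ := by simp
  have hn1 : ‖d1 θ ((σ:ℂ)+↑y*I)‖ = Real.exp (Real.pi*σ) := by rw [norm_d1_pt, hre]
  have hn2 : ‖d2 θ ((σ:ℂ)+↑y*I)‖ = Real.exp (Real.pi*σ) := by rw [norm_d2_pt, hre]
  have h4 : ‖1/(1 - d1 θ ((σ:ℂ)+↑y*I))‖ ≤ 2 ∧ ‖1/(1 - d2 θ ((σ:ℂ)+↑y*I))‖ ≤ 2 := by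
    rcases exp_pi_bounds σ hσ with ⟨h, _⟩ | ⟨h, _⟩
    · exact ⟨inv_one_sub_le_hi (by rw [hn1]; exact h), inv_one_sub_le_hi (by rw [hn2]; exact h)⟩
    · exact ⟨inv_one_sub_le_lo (by rw [hn1]; exact h), inv_one_sub_le_lo (by rw [hn2]; exact h)⟩
  calc ‖1/(1 - d1 θ ((σ:ℂ)+↑y*I)) - 1/(1 - d2 θ ((σ:ℂ)+↑y*I))‖
      ≤ ‖1/(1 - d1 θ ((σ:ℂ)+↑y*I))‖ + ‖1/(1 - d2 θ ((σ:ℂ)+↑y*I))‖ := norm_sub_le _ _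
    _ ≤ 4 := by linarith [h4.1, h4.2]

lemma norm_Ff_side (σ y : ℝ) (hσ : 1 ≤ |σ|) (hy0 : 0 ≤ y) (hy1 : y ≤ 1) :
    ‖Ff β γ θ ((σ:ℂ) + ↑y*I)‖
      ≤ 4 * Real.exp (β.re*σ^2 + (2*|β.im|+|γ.re|) * |σ| + (|β.re|+|γ.im|)) := by
  have h1 := norm_Hh_side β γ σ y hy0 hy1
  have h2 := norm_brk_side θ σ y hσ
  calc ‖Ff β γ θ ((σ:ℂ)+↑y*I)‖
      = ‖Hh β γ ((σ:ℂ)+↑y*I)‖ * ‖1/(1-d1 θ ((σ:ℂ)+↑y*I)) - 1/(1-d2 θ ((σ:ℂ)+↑y*I))‖ := by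
        unfold Ff; rw [norm_mul]
    _ ≤ Real.exp (β.re*σ^2 + (2*|β.im|+|γ.re|) * |σ| + (|β.re|+|γ.im|)) * 4 :=
        mul_le_mul h1 h2 (norm_nonneg _) (Real.exp_pos _).le
    _ = 4 * Real.exp (β.re*σ^2 + (2*|β.im|+|γ.re|) * |σ| + (|β.re|+|γ.im|)) := by ring

end Side

section Limits
variable (β γ : ℂ) {θ : ℝ} (hθ0 : 0 < θ) (hθπ : θ < Real.pi)
include hθ0 hθπ

omit hθ0 hθπ in
lemma tendsto_bnd (hβ : β.re < 0) :
    Tendsto (fun X : ℝ =>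
      4 * Real.exp (β.re*X^2 + (2*|β.im|+|γ.re|) * X + (|β.re|+|γ.im|))) atTop (𝓝 0) := by
  have h := (quad_tendsto hβ (2*|β.im|+|γ.re|) (|β.re|+|γ.im|)).const_mul (4:ℝ)
  simpa using h

omit hθ0 hθπ in
lemma tendsto_side_right (hβ : β.re < 0) :
    Tendsto (fun X : ℝ => ∫ y in (0:ℝ)..1, Ff β γ θ ((X:ℂ) + ↑y*I)) atTop (𝓝 0) := by
  apply squeeze_zero_norm' ?_ (tendsto_bnd β γ hβ)
  filter_upwards [eventually_ge_atTop (1:ℝ)] with X hX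
  have hb : ∀ y ∈ Set.uIoc (0:ℝ) 1, ‖Ff β γ θ ((X:ℂ) + ↑y*I)‖
      ≤ 4 * Real.exp (β.re*X^2 + (2*|β.im|+|γ.re|) * X + (|β.re|+|γ.im|)) := by
    intro y hy
    rw [Set.uIoc_of_le (by norm_num : (0:ℝ) ≤ 1)] at hy
    have habs : |X| = X := abs_of_nonneg (by linarith)
    have h := norm_Ff_side β γ θ X y (by rw [habs]; exact hX) hy.1.le hy.2
    rwa [habs] at h
  have h := intervalIntegral.norm_integral_le_of_norm_le_const hb
  simpa using h

omit hθ0 hθπ in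
lemma tendsto_side_left (hβ : β.re < 0) :
    Tendsto (fun X : ℝ => ∫ y in (0:ℝ)..1, Ff β γ θ (-(X:ℂ) + ↑y*I)) atTop (𝓝 0) := by
  apply squeeze_zero_norm' ?_ (tendsto_bnd β γ hβ)
  filter_upwards [eventually_ge_atTop (1:ℝ)] with X hX
  have hb : ∀ y ∈ Set.uIoc (0:ℝ) 1, ‖Ff β γ θ (-(X:ℂ) + ↑y*I)‖
      ≤ 4 * Real.exp (β.re*X^2 + (2*|β.im|+|γ.re|) * X + (|β.re|+|γ.im|)) := by
    intro y hy
    rw [Set.uIoc_of_le (by norm_num : (0:ℝ) ≤ 1)] at hy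
    have habs : |(-X)| = X := by rw [abs_neg]; exact abs_of_nonneg (by linarith)
    have hc : -(X:ℂ) + (y:ℂ)*I = (((-X : ℝ):ℂ) + (y:ℂ)*I) := by push_cast; ring
    have h := norm_Ff_side β γ θ (-X) y (by rw [habs]; exact hX) hy.1.le hy.2
    rw [habs, neg_sq] at h
    rwa [hc]
  have h := intervalIntegral.norm_integral_le_of_norm_le_const hb
  simpa using h

lemma tendsto_cmp_right :
    Tendsto (fun X : ℝ => ∫ y in (0:ℝ)..1, cmp β γ θ ((X:ℂ) + ↑y*I)) atTop (𝓝 0) := by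
  have hlim : Tendsto (fun X:ℝ => ‖Ee β γ θ‖ / (Real.pi * X)) atTop (𝓝 0) := by
    have h1 : Tendsto (fun X:ℝ => Real.pi * X) atTop atTop :=
      (tendsto_const_mul_atTop_of_pos Real.pi_pos).mpr tendsto_id
    have := (tendsto_inv_atTop_zero.comp h1).const_mul (‖Ee β γ θ‖)
    simpa [div_eq_mul_inv, Function.comp] using this
  apply squeeze_zero_norm' ?_ hlim
  filter_upwards [eventually_ge_atTop (1:ℝ)] with X hX
  have hb : ∀ y ∈ Set.uIoc (0:ℝ) 1, ‖cmp β γ θ ((X:ℂ) + ↑y*I)‖ ≤ ‖Ee β γ θ‖ / (Real.pi * X) := by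
    intro y hy
    have hπ := Real.pi_gt_three
    have hd : ‖d1 θ ((X:ℂ)+↑y*I)‖ = Real.exp (Real.pi*X) := by
      rw [norm_d1_pt]; norm_num
    have hge : Real.pi * X ≤ ‖(1:ℂ) - d1 θ ((X:ℂ)+↑y*I)‖ := by
      have h2 := norm_sub_norm_le (d1 θ ((X:ℂ)+↑y*I)) 1
      rw [norm_one, hd] at h2
      rw [norm_sub_rev]
      have := Real.add_one_le_exp (Real.pi*X)
      linarith
    have hpos : (0:ℝ) < Real.pi * X := by nlinarith
    calc ‖cmp β γ θ ((X:ℂ)+↑y*I)‖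
        = ‖Ee β γ θ‖ / ‖(1:ℂ) - d1 θ ((X:ℂ)+↑y*I)‖ := by unfold cmp; rw [norm_div]
      _ ≤ ‖Ee β γ θ‖ / (Real.pi * X) := by
          apply div_le_div_of_nonneg_left (norm_nonneg _) hpos hge
  have h := intervalIntegral.norm_integral_le_of_norm_le_const hb
  simpa using h

lemma tendsto_cmp_left :
    Tendsto (fun X : ℝ => ∫ y in (0:ℝ)..1, cmp β γ θ (-(X:ℂ) + ↑y*I)) atTop
      (𝓝 (Ee β γ θ)) := by
  have hs := Real.sin_pos_of_pos_of_lt_pi hθ0 hθπ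
  -- norm of d1 on left side
  have hd : ∀ (X y : ℝ), ‖d1 θ (-(X:ℂ)+↑y*I)‖ = Real.exp (Real.pi*(-X)) := by
    intro X y
    rw [show -(X:ℂ)+(y:ℂ)*I = (((-X:ℝ):ℂ)+(y:ℂ)*I) from by push_cast; ring, norm_d1_pt]
    norm_num
  have hsmall : ∀ (X : ℝ), 1 ≤ X → ∀ (y : ℝ), ‖d1 θ (-(X:ℂ)+↑y*I)‖ ≤ 1/2 := by
    intro X hX y
    rw [hd]
    rcases exp_pi_bounds (-X) (by rw [abs_neg, show |X| = X from abs_of_nonneg (by linarith)]; exact hX) with ⟨h, hc⟩ | ⟨h, _⟩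
    · linarith
    · exact h
  have hne : ∀ (X : ℝ), 1 ≤ X → ∀ (y : ℝ), (1:ℂ) - d1 θ (-(X:ℂ)+↑y*I) ≠ 0 := by
    intro X hX y h
    have h1 := hsmall X hX y
    have : d1 θ (-(X:ℂ)+↑y*I) = 1 := by linear_combination -h
    rw [this, norm_one] at h1
    linarith
  have hlow : ∀ (X : ℝ), 1 ≤ X → ∀ (y : ℝ), (1/2:ℝ) ≤ ‖(1:ℂ) - d1 θ (-(X:ℂ)+↑y*I)‖ := by
    intro X hX y
    have h2 := norm_sub_norm_le (1:ℂ) (d1 θ (-(X:ℂ)+↑y*I))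
    rw [norm_one] at h2
    have := hsmall X hX y
    linarith
  -- split off the constant
  have hint : ∀ (X : ℝ), 1 ≤ X →
      IntervalIntegrable (fun y:ℝ => cmp β γ θ (-(X:ℂ)+↑y*I)) volume 0 1 := by
    intro X hX
    apply Continuous.intervalIntegrable
    unfold cmp
    exact continuous_const.div (continuous_const.sub (by unfold d1; fun_prop)) (fun y => hne X hX y)
  have hsplit : ∀ (X : ℝ), 1 ≤ X →
      (∫ y in (0:ℝ)..1, cmp β γ θ (-(X:ℂ)+↑y*I))
        = (∫ y in (0:ℝ)..1, (cmp β γ θ (-(X:ℂ)+↑y*I) - Ee β γ θ)) + Ee β γ θ := by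
    intro X hX
    rw [intervalIntegral.integral_sub (hint X hX) intervalIntegrable_const,
      intervalIntegral.integral_const]
    simp
  have hdiff : Tendsto (fun X:ℝ => ∫ y in (0:ℝ)..1, (cmp β γ θ (-(X:ℂ)+↑y*I) - Ee β γ θ))
      atTop (𝓝 0) := by
    have hlim : Tendsto (fun X:ℝ => 2*‖Ee β γ θ‖*Real.exp (-Real.pi*X)) atTop (𝓝 0) := by
      have h1 : Tendsto (fun X:ℝ => -Real.pi*X) atTop atBot :=
        (tendsto_const_mul_atBot_of_neg (by linarith [Real.pi_pos])).mpr tendsto_id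
      have := (Real.tendsto_exp_atBot.comp h1).const_mul (2*‖Ee β γ θ‖)
      simpa [Function.comp] using this
    apply squeeze_zero_norm' ?_ hlim
    filter_upwards [eventually_ge_atTop (1:ℝ)] with X hX
    have hb : ∀ y ∈ Set.uIoc (0:ℝ) 1, ‖cmp β γ θ (-(X:ℂ)+↑y*I) - Ee β γ θ‖
        ≤ 2*‖Ee β γ θ‖*Real.exp (-Real.pi*X) := by
      intro y hy
      have hne' := hne X hX y
      have heq : cmp β γ θ (-(X:ℂ)+↑y*I) - Ee β γ θ
          = Ee β γ θ * d1 θ (-(X:ℂ)+↑y*I) / (1 - d1 θ (-(X:ℂ)+↑y*I)) := by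
        unfold cmp
        field_simp
        ring
      rw [heq, norm_div, norm_mul]
      have h1 := hlow X hX y
      have h2 : ‖d1 θ (-(X:ℂ)+↑y*I)‖ = Real.exp (-Real.pi*X) := by rw [hd]; ring_nf
      rw [h2]
      rw [div_le_iff₀ (by linarith)]
      have h3 := Real.exp_pos (-Real.pi*X)
      have h4 := norm_nonneg (Ee β γ θ)
      have key : (0:ℝ) ≤ 2*‖Ee β γ θ‖*Real.exp (-Real.pi*X)*(‖(1:ℂ) - d1 θ (-(X:ℂ)+↑y*I)‖-1/2) := by
        apply mul_nonneg (by positivity)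
        linarith
      nlinarith [key]
    have h := intervalIntegral.norm_integral_le_of_norm_le_const hb
    simpa using h
  have := hdiff.add (tendsto_const_nhds (x := Ee β γ θ))
  rw [zero_add] at this
  apply this.congr'
  filter_upwards [eventually_ge_atTop (1:ℝ)] with X hX
  exact (hsplit X hX).symm

-- bridge lemmas for the lines y = 0, 1 without the * I forms
lemma ne_d1_bot (x : ℝ) : (1:ℂ) - d1 θ ↑x ≠ 0 := by
  have h := line_ne_d1 hθ0 hθπ 0 (Or.inl rfl) x
  simpa using h

lemma ne_d2_bot (x : ℝ) : (1:ℂ) - d2 θ ↑x ≠ 0 := by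
  have h := line_ne_d2 hθ0 hθπ 0 (Or.inl rfl) x
  simpa using h

lemma ne_d1_top (x : ℝ) : (1:ℂ) - d1 θ (↑x + I) ≠ 0 := by
  have h := line_ne_d1 hθ0 hθπ 1 (Or.inr rfl) x
  simpa using h

lemma ne_d2_top (x : ℝ) : (1:ℂ) - d2 θ (↑x + I) ≠ 0 := by
  have h := line_ne_d2 hθ0 hθπ 1 (Or.inr rfl) x
  simpa using h

omit hθ0 hθπ in
lemma d1_im_real (x : ℝ) : (d1 θ ↑x).im = -(Real.exp (Real.pi*x) * Real.sin θ) := by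
  rw [d1, Complex.exp_im]
  have h1 : ((Real.pi:ℂ)*↑x - (θ:ℂ)*I).re = Real.pi*x := by simp
  have h2 : ((Real.pi:ℂ)*↑x - (θ:ℂ)*I).im = -θ := by simp
  rw [h1, h2, Real.sin_neg]
  ring

lemma Aa_hasDeriv (x : ℝ) :
    HasDerivAt (Aa β γ θ) (cmp β γ θ ↑x - cmp β γ θ (↑x + I)) x := by
  have hs := Real.sin_pos_of_pos_of_lt_pi hθ0 hθπ
  have harg : HasDerivAt (fun t:ℝ => (Real.pi:ℂ)*(t:ℂ) - (θ:ℂ)*I) ((Real.pi:ℂ)) x := by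
    simpa using (((hasDerivAt_id x).ofReal_comp).const_mul ((Real.pi:ℂ))).sub_const ((θ:ℂ)*I)
  have hw : HasDerivAt (fun t:ℝ => d1 θ ↑t) ((Real.pi:ℂ) * d1 θ ↑x) x := by
    have h := harg.cexp
    unfold d1
    simpa [mul_comm] using h
  have him : (d1 θ ↑x).im = -(Real.exp (Real.pi*x) * Real.sin θ) := d1_im_real x
  have himne : (d1 θ ↑x).im ≠ 0 := by
    rw [him]
    have := Real.exp_pos (Real.pi*x)
    intro hcon
    nlinarith
  have hmem1 : (1 + d1 θ ↑x) ∈ Complex.slitPlane := by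
    rw [Complex.mem_slitPlane_iff]
    right
    simpa using himne
  have hmem2 : (1 - d1 θ ↑x) ∈ Complex.slitPlane := by
    rw [Complex.mem_slitPlane_iff]
    right
    simp only [Complex.sub_im, Complex.one_im, zero_sub, ne_eq, neg_eq_zero]
    exact himne
  have hlog1 : HasDerivAt (fun t:ℝ => Complex.log (1 + d1 θ ↑t))
      (((Real.pi:ℂ) * d1 θ ↑x)/(1 + d1 θ ↑x)) x :=
    HasDerivAt.clog_real (hw.const_add 1) hmem1
  have hlog2 : HasDerivAt (fun t:ℝ => Complex.log (1 - d1 θ ↑t))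
      ((-((Real.pi:ℂ) * d1 θ ↑x))/(1 - d1 θ ↑x)) x :=
    HasDerivAt.clog_real (hw.const_sub 1) hmem2
  have hA : HasDerivAt (Aa β γ θ)
      ((Ee β γ θ/(Real.pi:ℂ)) * (((Real.pi:ℂ) * d1 θ ↑x)/(1 + d1 θ ↑x)
        - (-((Real.pi:ℂ) * d1 θ ↑x))/(1 - d1 θ ↑x))) x := by
    unfold Aa
    exact (hlog1.sub hlog2).const_mul _
  convert hA using 1
  have h1ne : (1:ℂ) + d1 θ ↑x ≠ 0 := by
    intro h
    apply himne
    have := congrArg Complex.im h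
    simpa using this
  have h2ne : (1:ℂ) - d1 θ ↑x ≠ 0 := by
    intro h
    apply himne
    have := congrArg Complex.im h
    simpa using this
  have hd1I : d1 θ (↑x + I) = - d1 θ ↑x := by
    rw [d1, d1, show (Real.pi:ℂ)*(↑x+I) - (θ:ℂ)*I = ((Real.pi:ℂ)*↑x - (θ:ℂ)*I) + (Real.pi:ℂ)*I
      from by ring, Complex.exp_add, Complex.exp_pi_mul_I]
    ring
  have hπne : (Real.pi:ℂ) ≠ 0 := Complex.ofReal_ne_zero.mpr Real.pi_ne_zero
  unfold cmp
  rw [hd1I]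
  rw [show (1:ℂ) - -d1 θ ↑x = 1 + d1 θ ↑x from by ring]
  field_simp
  ring

lemma cmp_FTC (X : ℝ) :
    ∫ x in (-X)..X, (cmp β γ θ ↑x - cmp β γ θ (↑x + I))
      = Aa β γ θ X - Aa β γ θ (-X) := by
  apply intervalIntegral.integral_eq_sub_of_hasDerivAt (fun x _ => Aa_hasDeriv β γ hθ0 hθπ x)
  apply Continuous.intervalIntegrable
  have c0 : Continuous fun x:ℝ => cmp β γ θ ↑x := by
    unfold cmp
    exact continuous_const.div (continuous_const.sub (by unfold d1; fun_prop))
      (fun x => ne_d1_bot hθ0 hθπ x)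
  have c1 : Continuous fun x:ℝ => cmp β γ θ (↑x + I) := by
    unfold cmp
    exact continuous_const.div (continuous_const.sub (by unfold d1; fun_prop))
      (fun x => ne_d1_top hθ0 hθπ x)
  exact c0.sub c1

lemma tendsto_Aa_neg : Tendsto (fun X:ℝ => Aa β γ θ (-X)) atTop (𝓝 0) := by
  have hw : Tendsto (fun X:ℝ => d1 θ ↑(-X)) atTop (𝓝 0) := by
    rw [tendsto_zero_iff_norm_tendsto_zero]
    have heq : ∀ X:ℝ, ‖d1 θ ↑(-X)‖ = Real.exp (Real.pi * -X) := fun X => by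
      rw [norm_d1_pt]; norm_num
    have h1 : Tendsto (fun X:ℝ => Real.pi * -X) atTop atBot := by
      have := (tendsto_const_mul_atBot_of_neg
        (show -Real.pi < 0 by linarith [Real.pi_pos])).mpr (tendsto_id (α := ℝ))
      refine this.congr fun X => by simp only [id_eq]; ring
    exact (Real.tendsto_exp_atBot.comp h1).congr fun X => (heq X).symm
  have hcont : ContinuousAt (fun w:ℂ =>
      (Ee β γ θ/(Real.pi:ℂ)) * (Complex.log (1+w) - Complex.log (1-w))) 0 := by
    apply ContinuousAt.mul continuousAt_const
    apply ContinuousAt.sub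
    · exact (continuousAt_clog (by norm_num [Complex.mem_slitPlane_iff])).comp
        ((continuous_const.add continuous_id).continuousAt)
    · exact (continuousAt_clog (by norm_num [Complex.mem_slitPlane_iff])).comp
        ((continuous_const.sub continuous_id).continuousAt)
  have h := hcont.tendsto.comp hw
  simp only [add_zero, sub_zero, Complex.log_one] at h
  have h2 : Tendsto (fun X:ℝ => Aa β γ θ (-X)) atTop
      (𝓝 ((Ee β γ θ/(Real.pi:ℂ)) * 0)) := by
    apply h.congr
    intro X
    simp [Aa, Function.comp]
  simpa using h2

lemma tendsto_Aa_pos : Tendsto (fun X:ℝ => Aa β γ θ X) atTop (𝓝 (-I * Ee β γ θ)) := by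
  have hs := Real.sin_pos_of_pos_of_lt_pi hθ0 hθπ
  set c : ℂ := Complex.exp (-(θ:ℂ)*I) with hc
  have hcim : c.im = -Real.sin θ := by
    rw [hc, Complex.exp_im]
    have h1 : (-(θ:ℂ)*I).re = 0 := by simp
    have h2 : (-(θ:ℂ)*I).im = -θ := by simp
    rw [h1, h2, Real.sin_neg, Real.exp_zero]
    ring
  have hv1 : ∀ ρ:ℝ, ((ρ:ℝ):ℂ) + c ≠ 0 := by
    intro ρ h
    have := congrArg Complex.im h
    simp [hcim] at this
    linarith
  have hv2 : ∀ ρ:ℝ, ((ρ:ℝ):ℂ) - c ≠ 0 := by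
    intro ρ h
    have := congrArg Complex.im h
    simp [hcim] at this
    linarith
  have hkey : ∀ X:ℝ, Aa β γ θ X = (Ee β γ θ/(Real.pi:ℂ)) *
      (Complex.log (((Real.exp (-(Real.pi*X)):ℝ):ℂ) + c)
        - Complex.log (((Real.exp (-(Real.pi*X)):ℝ):ℂ) - c)) := by
    intro X
    have hρ : (0:ℝ) < Real.exp (Real.pi*X) := Real.exp_pos _
    have hw : d1 θ ((X:ℝ):ℂ) = ((Real.exp (Real.pi*X):ℝ):ℂ) * c := by
      rw [d1, show (Real.pi:ℂ)*(X:ℂ) - (θ:ℂ)*I = ((Real.pi*X:ℝ):ℂ) + (-(θ:ℂ)*I)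
        from by push_cast; ring, Complex.exp_add, ← Complex.ofReal_exp]
    have hmulinv : (Real.exp (Real.pi*X)) * (Real.exp (-(Real.pi*X))) = 1 := by
      rw [← Real.exp_add]; simp
    have h1 : (1:ℂ) + d1 θ ((X:ℝ):ℂ)
        = ((Real.exp (Real.pi*X):ℝ):ℂ) * (((Real.exp (-(Real.pi*X)):ℝ):ℂ) + c) := by
      rw [hw, mul_add, ← Complex.ofReal_mul, hmulinv, Complex.ofReal_one]
    have h2 : (1:ℂ) - d1 θ ((X:ℝ):ℂ)
        = ((Real.exp (Real.pi*X):ℝ):ℂ) * (((Real.exp (-(Real.pi*X)):ℝ):ℂ) - c) := by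
      rw [hw, mul_sub, ← Complex.ofReal_mul, hmulinv, Complex.ofReal_one]
    unfold Aa
    rw [h1, h2, Complex.log_ofReal_mul hρ (hv1 _), Complex.log_ofReal_mul hρ (hv2 _)]
    ring
  have hρ0 : Tendsto (fun X:ℝ => ((Real.exp (-(Real.pi*X)):ℝ):ℂ)) atTop (𝓝 0) := by
    rw [show (0:ℂ) = ((0:ℝ):ℂ) from by simp]
    apply Tendsto.comp (Complex.continuous_ofReal.tendsto 0)
    have h1 : Tendsto (fun X:ℝ => -(Real.pi*X)) atTop atBot := by
      have := (tendsto_const_mul_atBot_of_neg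
        (show -Real.pi < 0 by linarith [Real.pi_pos])).mpr (tendsto_id (α := ℝ))
      refine this.congr fun X => by simp only [id_eq]; ring
    exact Real.tendsto_exp_atBot.comp h1
  have hcont : ContinuousAt (fun w:ℂ =>
      (Ee β γ θ/(Real.pi:ℂ)) * (Complex.log (w + c) - Complex.log (w - c))) 0 := by
    apply ContinuousAt.mul continuousAt_const
    apply ContinuousAt.sub
    · apply (continuousAt_clog ?_).comp ((continuous_id.add continuous_const).continuousAt)
      rw [Complex.mem_slitPlane_iff]
      right
      simp [hcim, Complex.exp_im]
      linarith
    · apply (continuousAt_clog ?_).comp ((continuous_id.sub continuous_const).continuousAt)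
      rw [Complex.mem_slitPlane_iff]
      right
      simp [hcim, Complex.exp_im]
      linarith
  have h := hcont.tendsto.comp hρ0
  have hlogc : Complex.log c = -(θ:ℂ)*I := by
    rw [hc]
    apply Complex.log_exp
    · simp; linarith
    · simp; linarith [Real.pi_pos]
  have hlognegc : Complex.log (0 - c) = ((Real.pi - θ:ℝ):ℂ)*I := by
    rw [zero_sub, show -c = Complex.exp (((Real.pi - θ:ℝ):ℂ)*I) from ?_, Complex.log_exp]
    · rw [show (((Real.pi - θ:ℝ):ℂ)*I).im = Real.pi - θ from by simp]; linarith
    · rw [show (((Real.pi - θ:ℝ):ℂ)*I).im = Real.pi - θ from by simp]; linarith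
    · rw [hc, show (((Real.pi - θ:ℝ):ℂ)*I) = (Real.pi:ℂ)*I + (-(θ:ℂ)*I) from by push_cast; ring,
        Complex.exp_add, Complex.exp_pi_mul_I]
      ring
  have hval : (Ee β γ θ/(Real.pi:ℂ)) * (Complex.log (0 + c) - Complex.log (0 - c))
      = -I * Ee β γ θ := by
    rw [zero_add, hlogc, hlognegc]
    have hπne : (Real.pi:ℂ) ≠ 0 := Complex.ofReal_ne_zero.mpr Real.pi_ne_zero
    push_cast
    field_simp
    ring
  rw [← hval]
  apply h.congr
  intro X
  simp only [Function.comp]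
  exact (hkey X).symm

end Limits

section Ball
variable (β γ : ℂ) {θ : ℝ} (hθ0 : 0 < θ) (hθπ : θ < Real.pi)
include hθ0 hθπ

omit hθ0 in
lemma d1_z0 : d1 θ (z0 θ) = 1 := by
  have hne : (Real.pi : ℝ) ≠ 0 := Real.pi_ne_zero
  have h : (Real.pi:ℂ) * (((θ/Real.pi : ℝ)):ℂ) = (θ:ℂ) := by
    push_cast
    rw [mul_comm]
    exact div_mul_cancel₀ _ (by exact_mod_cast hne)
  rw [d1, z0, show (Real.pi:ℂ) * ((((θ/Real.pi:ℝ)):ℂ)*I) - (θ:ℂ)*I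
    = ((Real.pi:ℂ) * (((θ/Real.pi:ℝ)):ℂ) - (θ:ℂ))*I from by ring, h, sub_self, zero_mul,
    Complex.exp_zero]

lemma z0_im_mem : 0 ≤ (z0 θ).im ∧ (z0 θ).im ≤ 1 := by
  have hπ := Real.pi_pos
  constructor
  · rw [z0_im]; positivity
  · rw [z0_im]; exact le_of_lt ((div_lt_one hπ).mpr hθπ)

lemma exists_ball_diff : ∃ ρ > 0, DifferentiableOn ℂ (Gg β γ θ) (Metric.ball (z0 θ) ρ) := by
  have hπ := Real.pi_pos
  have ht0 : 0 < θ/Real.pi := div_pos hθ0 hπ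
  have ht1 : θ/Real.pi < 1 := (div_lt_one hπ).mpr hθπ
  set ρ' := min (θ/Real.pi) (1 - θ/Real.pi) with hρ'
  have hρ'0 : 0 < ρ' := lt_min ht0 (by linarith)
  have hball_im : ∀ ζ ∈ Metric.ball (z0 θ) ρ', 0 ≤ ζ.im ∧ ζ.im ≤ 1 := by
    intro ζ hζ
    rw [Metric.mem_ball, Complex.dist_eq] at hζ
    have h1 : |(ζ - z0 θ).im| ≤ ‖ζ - z0 θ‖ := Complex.abs_im_le_norm _
    have h2 : (ζ - z0 θ).im = ζ.im - θ/Real.pi := by rw [Complex.sub_im, z0_im]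
    rw [h2] at h1
    obtain ⟨ha, hb⟩ := abs_lt.mp (lt_of_le_of_lt h1 hζ)
    have hl := min_le_left (θ/Real.pi) (1 - θ/Real.pi)
    have hr := min_le_right (θ/Real.pi) (1 - θ/Real.pi)
    constructor <;> linarith
  have hdFC : DifferentiableOn ℂ (FC β γ θ) (Metric.ball (z0 θ) ρ' \ {z0 θ}) := by
    rintro ζ ⟨hb, hn⟩
    rw [Set.mem_singleton_iff] at hn
    have him := hball_im ζ hb
    have h1 : (1:ℂ) - d1 θ ζ ≠ 0 := one_sub_d1_ne hθ0 hθπ him.1 him.2 hn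
    have h2 : (1:ℂ) - d2 θ ζ ≠ 0 := one_sub_d2_ne hθ0 hθπ him.1 him.2
    have := (diffAt_Ff β γ θ h1 h2).sub (diffAt_cmp β γ θ h1)
    unfold FC
    exact this.differentiableWithinAt
  -- derivative facts at z0
  have hDd : HasDerivAt (fun z => (1:ℂ) - d1 θ z) (-(Real.pi:ℂ)) (z0 θ) := by
    have harg : HasDerivAt (fun z:ℂ => (Real.pi:ℂ)*z - (θ:ℂ)*I) ((Real.pi:ℂ)) (z0 θ) := by
      simpa using ((hasDerivAt_id (z0 θ)).const_mul ((Real.pi:ℂ))).sub_const ((θ:ℂ)*I)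
    have h := harg.cexp
    have hd1 : d1 θ (z0 θ) = 1 := d1_z0 hθπ
    have h2 : HasDerivAt (d1 θ) ((Real.pi:ℂ)) (z0 θ) := by
      unfold d1
      rw [show Complex.exp ((Real.pi:ℂ)*(z0 θ) - (θ:ℂ)*I) = d1 θ (z0 θ) from rfl, hd1, one_mul] at h
      exact h
    simpa using h2.const_sub 1
  have hDH : HasDerivAt (Hh β γ) (Complex.exp (β*(z0 θ)^2 + γ*(z0 θ)) * (β*(2*(z0 θ))+γ))
      (z0 θ) := by
    have hinner : HasDerivAt (fun z:ℂ => β*z^2 + γ*z) (β*(2*(z0 θ))+γ) (z0 θ) := by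
      have h1 := (hasDerivAt_pow 2 (z0 θ)).const_mul β
      have h2 := (hasDerivAt_id (z0 θ)).const_mul γ
      exact (h1.add h2).congr_deriv (by simp)
    have h := hinner.cexp
    unfold Hh
    exact h
  have hq := hasDerivAt_iff_tendsto_slope.mp hDd
  have hp := hasDerivAt_iff_tendsto_slope.mp hDH
  have h2z0 : (1:ℂ) - d2 θ (z0 θ) ≠ 0 :=
    one_sub_d2_ne hθ0 hθπ (z0_im_mem hθ0 hθπ).1 (z0_im_mem hθ0 hθπ).2
  have hcont2 : ContinuousAt (fun ζ => Hh β γ ζ / (1 - d2 θ ζ)) (z0 θ) :=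
    ((diff_Hh β γ) _).continuousAt.div
      (((differentiableAt_const (1:ℂ)).sub ((diff_d2 θ) _)).continuousAt) h2z0
  have hπne : -(Real.pi:ℂ) ≠ 0 := by
    simp [Complex.ofReal_ne_zero, Real.pi_ne_zero]
  have hmain := (hp.div hq hπne).sub ((hcont2.tendsto).mono_left nhdsWithin_le_nhds)
  have hballmem : Metric.ball (z0 θ) ρ' ∈ 𝓝[≠] (z0 θ) :=
    nhdsWithin_le_nhds (Metric.ball_mem_nhds (z0 θ) hρ'0)
  have heq : (fun ζ => slope (Hh β γ) (z0 θ) ζ / slope (fun z => (1:ℂ) - d1 θ z) (z0 θ) ζ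
      - Hh β γ ζ / (1 - d2 θ ζ)) =ᶠ[𝓝[≠] (z0 θ)] FC β γ θ := by
    filter_upwards [hballmem, self_mem_nhdsWithin] with ζ hζb hζn
    rw [Set.mem_compl_iff, Set.mem_singleton_iff] at hζn
    have him := hball_im ζ hζb
    have h1 : (1:ℂ) - d1 θ ζ ≠ 0 := one_sub_d1_ne hθ0 hθπ him.1 him.2 hζn
    have h2 : (1:ℂ) - d2 θ ζ ≠ 0 := one_sub_d2_ne hθ0 hθπ him.1 him.2
    have hζz : ζ - z0 θ ≠ 0 := sub_ne_zero.mpr hζn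
    rw [slope_def_field, slope_def_field]
    have hd1 : d1 θ (z0 θ) = 1 := d1_z0 hθπ
    have hEe : Hh β γ (z0 θ) = Ee β γ θ := rfl
    rw [hd1, hEe]
    unfold FC Ff cmp
    rw [sub_self]
    rw [show (1:ℂ) - d1 θ ζ - 0 = 1 - d1 θ ζ from by ring]
    field_simp
    ring
  have htend := hmain.congr' heq
  have hbd := htend.norm.eventually_lt_const
    (lt_add_one ‖Complex.exp (β*(z0 θ)^2 + γ*(z0 θ)) * (β*(2*(z0 θ))+γ) / (-(Real.pi:ℂ))
      - Hh β γ (z0 θ) / (1 - d2 θ (z0 θ))‖)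
  obtain ⟨ε, hε0, hball⟩ := (Metric.nhdsWithin_basis_ball.eventually_iff).mp hbd
  refine ⟨min ρ' ε, lt_min hρ'0 hε0, ?_⟩
  have hsub1 : Metric.ball (z0 θ) (min ρ' ε) ⊆ Metric.ball (z0 θ) ρ' :=
    Metric.ball_subset_ball (min_le_left _ _)
  have hsub2 : Metric.ball (z0 θ) (min ρ' ε) ⊆ Metric.ball (z0 θ) ε :=
    Metric.ball_subset_ball (min_le_right _ _)
  unfold Gg
  exact Complex.differentiableOn_update_limUnder_of_bddAbove
    (Metric.ball_mem_nhds (z0 θ) (lt_min hρ'0 hε0))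
    (hdFC.mono (fun ζ hζ => ⟨hsub1 hζ.1, hζ.2⟩))
    ⟨‖Complex.exp (β * (z0 θ)^2 + γ * (z0 θ)) * (β * (2 * (z0 θ)) + γ) / -(Real.pi:ℂ)
        - Hh β γ (z0 θ) / (1 - d2 θ (z0 θ))‖ + 1, by
      rintro v ⟨ζ, ⟨hζb, hζn⟩, rfl⟩
      exact le_of_lt (hball ⟨hsub2 hζb, hζn⟩)⟩

end Ball

section Key
variable (β γ : ℂ) {θ : ℝ} (hθ0 : 0 < θ) (hθπ : θ < Real.pi)
include hθ0 hθπ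

omit hθ0 hθπ in
lemma vert_ne (z : ℂ) (hz : 1 ≤ |z.re|) :
    (1:ℂ) - d1 θ z ≠ 0 ∧ (1:ℂ) - d2 θ z ≠ 0 := by
  have hn1 : ‖d1 θ z‖ = Real.exp (Real.pi * z.re) := norm_d1_pt θ z
  have hn2 : ‖d2 θ z‖ = Real.exp (Real.pi * z.re) := norm_d2_pt θ z
  have hne : Real.exp (Real.pi * z.re) ≠ 1 := by
    rcases exp_pi_bounds z.re hz with ⟨h, _⟩ | ⟨h, _⟩ <;> intro hcon <;> rw [hcon] at h <;> linarith
  constructor <;> intro hcon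
  · have : d1 θ z = 1 := by linear_combination -hcon
    rw [this, norm_one] at hn1
    exact hne hn1.symm
  · have : d2 θ z = 1 := by linear_combination -hcon
    rw [this, norm_one] at hn2
    exact hne hn2.symm

omit hθ0 hθπ in
lemma cont_Ff_vert (a : ℂ) (h1 : ∀ y:ℝ, (1:ℂ) - d1 θ (a+↑y*I) ≠ 0)
    (h2 : ∀ y:ℝ, (1:ℂ) - d2 θ (a+↑y*I) ≠ 0) :
    Continuous fun y:ℝ => Ff β γ θ (a + ↑y*I) := by
  have c1 : Continuous fun y:ℝ => d1 θ (a+↑y*I) := by unfold d1; fun_prop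
  have c2 : Continuous fun y:ℝ => d2 θ (a+↑y*I) := by unfold d2; fun_prop
  have cH : Continuous fun y:ℝ => Hh β γ (a+↑y*I) := by unfold Hh; fun_prop
  unfold Ff
  exact cH.mul ((continuous_const.div (continuous_const.sub c1) h1).sub
    (continuous_const.div (continuous_const.sub c2) h2))

omit hθ0 hθπ in
lemma cont_cmp_vert (a : ℂ) (h1 : ∀ y:ℝ, (1:ℂ) - d1 θ (a+↑y*I) ≠ 0) :
    Continuous fun y:ℝ => cmp β γ θ (a + ↑y*I) := by
  have c1 : Continuous fun y:ℝ => d1 θ (a+↑y*I) := by unfold d1; fun_prop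
  unfold cmp
  exact continuous_const.div (continuous_const.sub c1) h1

lemma cont_Ff_bot : Continuous fun x:ℝ => Ff β γ θ ↑x := by
  have h := cont_Ff_line β γ θ 0 (line_ne_d1 hθ0 hθπ 0 (Or.inl rfl))
    (line_ne_d2 hθ0 hθπ 0 (Or.inl rfl))
  have heq : ∀ x:ℝ, ((x:ℂ) + ((0:ℝ):ℂ)*I) = (x:ℂ) := fun x => by simp
  simpa [heq] using h

lemma cont_Ff_top : Continuous fun x:ℝ => Ff β γ θ (↑x + I) := by
  have h := cont_Ff_line β γ θ 1 (line_ne_d1 hθ0 hθπ 1 (Or.inr rfl))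
    (line_ne_d2 hθ0 hθπ 1 (Or.inr rfl))
  have heq : ∀ x:ℝ, ((x:ℂ) + ((1:ℝ):ℂ)*I) = (x:ℂ) + I := fun x => by simp
  simpa [heq] using h

lemma cont_cmp_bot : Continuous fun x:ℝ => cmp β γ θ ↑x := by
  unfold cmp
  exact continuous_const.div (continuous_const.sub (by unfold d1; fun_prop))
    (fun x => ne_d1_bot hθ0 hθπ x)

lemma cont_cmp_top : Continuous fun x:ℝ => cmp β γ θ (↑x + I) := by
  unfold cmp
  exact continuous_const.div (continuous_const.sub (by unfold d1; fun_prop))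
    (fun x => ne_d1_top hθ0 hθπ x)

lemma integrable_Ff_bot (hβ : β.re < 0) : Integrable (fun x:ℝ => Ff β γ θ ↑x) := by
  have h := integrable_Ff_line β γ hθ0 hθπ hβ 0 (Or.inl rfl)
  refine h.congr (ae_of_all _ fun x => ?_)
  norm_num

lemma integrable_Ff_top (hβ : β.re < 0) : Integrable (fun x:ℝ => Ff β γ θ (↑x + I)) := by
  have h := integrable_Ff_line β γ hθ0 hθπ hβ 1 (Or.inr rfl)
  refine h.congr (ae_of_all _ fun x => ?_)
  norm_num

lemma rect_identity (X : ℝ) (hX : 1 ≤ X) :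
    ((∫ x in (-X)..X, Ff β γ θ ↑x) - (∫ x in (-X)..X, Ff β γ θ (↑x + I))
        + I • (∫ y in (0:ℝ)..1, Ff β γ θ ((X:ℂ) + ↑y*I))
        - I • (∫ y in (0:ℝ)..1, Ff β γ θ (-(X:ℂ) + ↑y*I)))
      = ((Aa β γ θ X - Aa β γ θ (-X))
        + I • (∫ y in (0:ℝ)..1, cmp β γ θ ((X:ℂ) + ↑y*I))
        - I • (∫ y in (0:ℝ)..1, cmp β γ θ (-(X:ℂ) + ↑y*I))) := by
  obtain ⟨ρ, hρ0, hGdiff⟩ := exists_ball_diff β γ hθ0 hθπ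
  have hπ := Real.pi_pos
  have ht0 : 0 < θ/Real.pi := div_pos hθ0 hπ
  have ht1 : θ/Real.pi < 1 := (div_lt_one hπ).mpr hθπ
  set z : ℂ := ((-X : ℝ) : ℂ) with hzdef
  set w : ℂ := (X:ℂ) + I with hwdef
  have hzre : z.re = -X := by simp [hzdef]
  have hzim : z.im = 0 := by simp [hzdef]
  have hwre : w.re = X := by simp [hwdef]
  have hwim : w.im = 1 := by simp [hwdef]
  have Hc : ContinuousOn (Gg β γ θ) ([[z.re, w.re]] ×ℂ [[z.im, w.im]]) := by
    intro ζ hζ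
    rw [Complex.mem_reProdIm] at hζ
    have him : ζ.im ∈ Set.Icc (0:ℝ) 1 := by
      have := hζ.2
      rw [hzim, hwim, Set.uIcc_of_le (by norm_num : (0:ℝ) ≤ 1)] at this
      exact this
    rcases eq_or_ne ζ (z0 θ) with rfl | hne
    · exact ((hGdiff.continuousOn).continuousAt (Metric.ball_mem_nhds _ hρ0)).continuousWithinAt
    · have h1 : (1:ℂ) - d1 θ ζ ≠ 0 := one_sub_d1_ne hθ0 hθπ him.1 him.2 hne
      have h2 : (1:ℂ) - d2 θ ζ ≠ 0 := one_sub_d2_ne hθ0 hθπ him.1 him.2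
      have hFC : ContinuousAt (FC β γ θ) ζ := by
        have h := (diffAt_Ff β γ θ h1 h2).sub (diffAt_cmp β γ θ h1)
        unfold FC
        exact h.continuousAt
      have heq : FC β γ θ =ᶠ[𝓝 ζ] Gg β γ θ := by
        filter_upwards [compl_singleton_mem_nhds hne] with ξ hξ
        exact (Function.update_of_ne hξ _ _).symm
      exact (hFC.congr heq).continuousWithinAt
  have Hd : ∀ ζ ∈ (Set.Ioo (min z.re w.re) (max z.re w.re) ×ℂ
      Set.Ioo (min z.im w.im) (max z.im w.im)) \ {z0 θ}, DifferentiableAt ℂ (Gg β γ θ) ζ := by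
    rintro ζ ⟨hζmem, hne⟩
    rw [Set.mem_singleton_iff] at hne
    rw [Complex.mem_reProdIm] at hζmem
    have him := hζmem.2
    rw [hzim, hwim] at him
    have him' : ζ.im ∈ Set.Ioo (0:ℝ) 1 := by
      have : min (0:ℝ) 1 = 0 := by norm_num
      have h2 : max (0:ℝ) 1 = 1 := by norm_num
      rwa [this, h2] at him
    have h1 : (1:ℂ) - d1 θ ζ ≠ 0 := one_sub_d1_ne hθ0 hθπ him'.1.le him'.2.le hne
    have h2 : (1:ℂ) - d2 θ ζ ≠ 0 := one_sub_d2_ne hθ0 hθπ him'.1.le him'.2.le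
    have hFC : DifferentiableAt ℂ (FC β γ θ) ζ := by
      have h := (diffAt_Ff β γ θ h1 h2).sub (diffAt_cmp β γ θ h1)
      unfold FC
      exact h
    apply hFC.congr_of_eventuallyEq
    filter_upwards [compl_singleton_mem_nhds hne] with ξ hξ
    exact Function.update_of_ne hξ _ _
  have h0 := Complex.integral_boundary_rect_eq_zero_of_differentiable_on_off_countable
    (Gg β γ θ) z w {z0 θ} (Set.countable_singleton _) Hc Hd
  rw [hzre, hzim, hwre, hwim] at h0
  simp only [Complex.ofReal_zero, zero_mul, add_zero, Complex.ofReal_one, one_mul,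
    Complex.ofReal_neg] at h0
  -- replace Gg by FC on the boundary
  have hz0ne_bot : ∀ x : ℝ, ((x:ℂ)) ≠ z0 θ := by
    intro x hcon
    have := congrArg Complex.im hcon
    rw [z0_im] at this
    simp at this
    linarith
  have hz0ne_top : ∀ x : ℝ, ((x:ℂ) + I) ≠ z0 θ := by
    intro x hcon
    have := congrArg Complex.im hcon
    rw [z0_im] at this
    simp at this
    linarith
  have hz0ne_right : ∀ y : ℝ, ((X:ℂ) + ↑y*I) ≠ z0 θ := by
    intro y hcon
    have := congrArg Complex.re hcon
    rw [z0_re] at this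
    simp at this
    linarith
  have hz0ne_left : ∀ y : ℝ, (-(X:ℂ) + ↑y*I) ≠ z0 θ := by
    intro y hcon
    have := congrArg Complex.re hcon
    rw [z0_re] at this
    simp at this
    linarith
  have hb1 : (∫ x in (-X)..X, Gg β γ θ ↑x) = ∫ x in (-X)..X, FC β γ θ ↑x :=
    intervalIntegral.integral_congr fun x _ => Function.update_of_ne (hz0ne_bot x) _ _
  have hb2 : (∫ x in (-X)..X, Gg β γ θ (↑x + I)) = ∫ x in (-X)..X, FC β γ θ (↑x + I) :=
    intervalIntegral.integral_congr fun x _ => Function.update_of_ne (hz0ne_top x) _ _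
  have hb3 : (∫ y in (0:ℝ)..1, Gg β γ θ ((X:ℂ) + ↑y*I))
      = ∫ y in (0:ℝ)..1, FC β γ θ ((X:ℂ) + ↑y*I) :=
    intervalIntegral.integral_congr fun y _ => Function.update_of_ne (hz0ne_right y) _ _
  have hb4 : (∫ y in (0:ℝ)..1, Gg β γ θ (-(X:ℂ) + ↑y*I))
      = ∫ y in (0:ℝ)..1, FC β γ θ (-(X:ℂ) + ↑y*I) :=
    intervalIntegral.integral_congr fun y _ => Function.update_of_ne (hz0ne_left y) _ _
  rw [hb1, hb2, hb3, hb4] at h0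
  -- split FC integrals
  have hvR := vert_ne (θ := θ)
  have habsX : |X| = X := abs_of_nonneg (by linarith)
  have hvr1 : ∀ y:ℝ, (1:ℂ) - d1 θ ((X:ℂ)+↑y*I) ≠ 0 := by
    intro y
    refine (vert_ne _ ?_).1
    simp [habsX]; linarith
  have hvr2 : ∀ y:ℝ, (1:ℂ) - d2 θ ((X:ℂ)+↑y*I) ≠ 0 := by
    intro y
    refine (vert_ne _ ?_).2
    simp [habsX]; linarith
  have hvl1 : ∀ y:ℝ, (1:ℂ) - d1 θ (-(X:ℂ)+↑y*I) ≠ 0 := by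
    intro y
    refine (vert_ne _ ?_).1
    simp [abs_neg, habsX]; linarith
  have hvl2 : ∀ y:ℝ, (1:ℂ) - d2 θ (-(X:ℂ)+↑y*I) ≠ 0 := by
    intro y
    refine (vert_ne _ ?_).2
    simp [abs_neg, habsX]; linarith
  have hs1 : (∫ x in (-X)..X, FC β γ θ ↑x)
      = (∫ x in (-X)..X, Ff β γ θ ↑x) - (∫ x in (-X)..X, cmp β γ θ ↑x) := by
    rw [← intervalIntegral.integral_sub ((cont_Ff_bot β γ hθ0 hθπ).intervalIntegrable _ _)
      ((cont_cmp_bot β γ hθ0 hθπ).intervalIntegrable _ _)]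
    rfl
  have hs2 : (∫ x in (-X)..X, FC β γ θ (↑x + I))
      = (∫ x in (-X)..X, Ff β γ θ (↑x + I)) - (∫ x in (-X)..X, cmp β γ θ (↑x + I)) := by
    rw [← intervalIntegral.integral_sub ((cont_Ff_top β γ hθ0 hθπ).intervalIntegrable _ _)
      ((cont_cmp_top β γ hθ0 hθπ).intervalIntegrable _ _)]
    rfl
  have hs3 : (∫ y in (0:ℝ)..1, FC β γ θ ((X:ℂ) + ↑y*I))
      = (∫ y in (0:ℝ)..1, Ff β γ θ ((X:ℂ) + ↑y*I))
        - (∫ y in (0:ℝ)..1, cmp β γ θ ((X:ℂ) + ↑y*I)) := by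
    rw [← intervalIntegral.integral_sub
      ((cont_Ff_vert β γ _ hvr1 hvr2).intervalIntegrable _ _)
      ((cont_cmp_vert β γ _ hvr1).intervalIntegrable _ _)]
    rfl
  have hs4 : (∫ y in (0:ℝ)..1, FC β γ θ (-(X:ℂ) + ↑y*I))
      = (∫ y in (0:ℝ)..1, Ff β γ θ (-(X:ℂ) + ↑y*I))
        - (∫ y in (0:ℝ)..1, cmp β γ θ (-(X:ℂ) + ↑y*I)) := by
    rw [← intervalIntegral.integral_sub
      ((cont_Ff_vert β γ _ hvl1 hvl2).intervalIntegrable _ _)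
      ((cont_cmp_vert β γ _ hvl1).intervalIntegrable _ _)]
    rfl
  rw [hs1, hs2, hs3, hs4] at h0
  -- FTC for the compensator
  have hFTC : (∫ x in (-X)..X, cmp β γ θ ↑x) - (∫ x in (-X)..X, cmp β γ θ (↑x + I))
      = Aa β γ θ X - Aa β γ θ (-X) := by
    rw [← intervalIntegral.integral_sub ((cont_cmp_bot β γ hθ0 hθπ).intervalIntegrable _ _)
      ((cont_cmp_top β γ hθ0 hθπ).intervalIntegrable _ _)]
    exact cmp_FTC β γ hθ0 hθπ X
  simp only [smul_eq_mul] at h0 ⊢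
  linear_combination h0 + hFTC

lemma key (hβ : β.re < 0) :
    (∫ x : ℝ, Ff β γ θ x) - (∫ x : ℝ, Ff β γ θ (x + I)) = -2 * I * Ee β γ θ := by
  have hLHS : Tendsto (fun X : ℝ =>
      ((∫ x in (-X)..X, Ff β γ θ ↑x) - (∫ x in (-X)..X, Ff β γ θ (↑x + I))
        + I • (∫ y in (0:ℝ)..1, Ff β γ θ ((X:ℂ) + ↑y*I))
        - I • (∫ y in (0:ℝ)..1, Ff β γ θ (-(X:ℂ) + ↑y*I)))) atTop
      (𝓝 ((∫ x : ℝ, Ff β γ θ x) - (∫ x : ℝ, Ff β γ θ (x + I)))) := by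
    have hb := MeasureTheory.intervalIntegral_tendsto_integral
      (integrable_Ff_bot β γ hθ0 hθπ hβ) tendsto_neg_atTop_atBot tendsto_id
    have ht := MeasureTheory.intervalIntegral_tendsto_integral
      (integrable_Ff_top β γ hθ0 hθπ hβ) tendsto_neg_atTop_atBot tendsto_id
    have hr := (tendsto_side_right β γ (θ := θ) hβ).const_smul (I : ℂ)
    have hl := (tendsto_side_left β γ (θ := θ) hβ).const_smul (I : ℂ)
    have h := ((hb.sub ht).add hr).sub hl
    simpa using h
  have hRHS : Tendsto (fun X : ℝ =>
      ((Aa β γ θ X - Aa β γ θ (-X))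
        + I • (∫ y in (0:ℝ)..1, cmp β γ θ ((X:ℂ) + ↑y*I))
        - I • (∫ y in (0:ℝ)..1, cmp β γ θ (-(X:ℂ) + ↑y*I)))) atTop
      (𝓝 (-I * Ee β γ θ - I • Ee β γ θ)) := by
    have ha := (tendsto_Aa_pos β γ hθ0 hθπ).sub (tendsto_Aa_neg β γ hθ0 hθπ)
    have hr := (tendsto_cmp_right β γ hθ0 hθπ).const_smul (I : ℂ)
    have hl := (tendsto_cmp_left β γ hθ0 hθπ).const_smul (I : ℂ)
    have h := (ha.add hr).sub hl
    simpa using h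
  have heq : (fun X : ℝ =>
      ((∫ x in (-X)..X, Ff β γ θ ↑x) - (∫ x in (-X)..X, Ff β γ θ (↑x + I))
        + I • (∫ y in (0:ℝ)..1, Ff β γ θ ((X:ℂ) + ↑y*I))
        - I • (∫ y in (0:ℝ)..1, Ff β γ θ (-(X:ℂ) + ↑y*I))))
      =ᶠ[atTop] (fun X : ℝ =>
      ((Aa β γ θ X - Aa β γ θ (-X))
        + I • (∫ y in (0:ℝ)..1, cmp β γ θ ((X:ℂ) + ↑y*I))
        - I • (∫ y in (0:ℝ)..1, cmp β γ θ (-(X:ℂ) + ↑y*I)))) := by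
    filter_upwards [eventually_ge_atTop (1:ℝ)] with X hX
    exact rect_identity β γ hθ0 hθπ X hX
  have hfinal := tendsto_nhds_unique (hLHS.congr' heq) hRHS
  rw [hfinal]
  simp only [smul_eq_mul]
  ring

end Key


lemma exp_triple (a b c d B C : ℂ) (h : a + b + c = d) (hBC : B = -C) :
    Complex.exp a * (Complex.exp b * Complex.exp c * B) = -(Complex.exp d * C) := by
  rw [← h, Complex.exp_add, Complex.exp_add, hBC]
  ring

end DHaux

namespace DSLST

/-- Proposition: ĥ_{k,r}(τ; u) + e^{−πiku − πikτ/2} ĥ_{k,k−r}(τ; u+τ) = 2 e^{−πiru − πir²τ/(2k)},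
    and ĥ_{k,r}(τ; u) = ĥ_{k,r}(τ; −u). -/
theorem hhat_shift_tau_and_even (k : ℤ) (hk : 2 ≤ k) (r : ℤ) (hr1 : 1 ≤ r) (hr2 : r ≤ k - 1)
    (τ : ℂ) (hτ : 0 < τ.im) (u : ℂ) :
    hhat k r τ u +
        Complex.exp (-(Real.pi : ℂ) * Complex.I * (k : ℂ) * u -
            (Real.pi : ℂ) * Complex.I * (k : ℂ) * τ / 2) *
          hhat k (k - r) τ (u + τ) =
      2 * Complex.exp (-(Real.pi : ℂ) * Complex.I * (r : ℂ) * u -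
        (Real.pi : ℂ) * Complex.I * (r : ℂ) ^ 2 * τ / (2 * (k : ℂ))) ∧
    hhat k r τ u = hhat k r τ (-u) := by
  have hkR : (0:ℝ) < (k:ℝ) := by exact_mod_cast (by omega : (0:ℤ) < k)
  have hrR : (0:ℝ) < (r:ℝ) := by exact_mod_cast (by omega : (0:ℤ) < r)
  have hrkR : (r:ℝ) < (k:ℝ) := by exact_mod_cast (by omega : r < k)
  have hkC : (k:ℂ) ≠ 0 := by exact_mod_cast (by omega : k ≠ 0)
  have hπ := Real.pi_pos
  set θ : ℝ := Real.pi * (r:ℝ) / (k:ℝ) with hθdef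
  have hθ0 : 0 < θ := by rw [hθdef]; positivity
  have hθπ : θ < Real.pi := by
    rw [hθdef, div_lt_iff₀ hkR]
    nlinarith
  have hsθ : 0 < Real.sin θ := Real.sin_pos_of_pos_of_lt_pi hθ0 hθπ
  set β : ℂ := ((Real.pi * (k:ℝ) / 2 : ℝ) : ℂ) * (τ * I) with hβdef
  set γ : ℂ := -(Real.pi:ℂ) * (k:ℂ) * u with hγdef
  have hβre : β.re < 0 := by
    rw [hβdef]
    rw [show (((Real.pi * (k:ℝ) / 2 : ℝ) : ℂ) * (τ * I)).re
      = (Real.pi * (k:ℝ) / 2) * (τ * I).re from by simp, Complex.mul_I_re]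
    nlinarith [mul_pos (mul_pos hπ hkR) hτ]
  -- nonvanishing of the denominators for real x
  have hne1 : ∀ x : ℝ, Complex.exp ((Real.pi:ℂ)*(x:ℂ) + (Real.pi:ℂ)*I*(r:ℂ)/(k:ℂ)) ≠ 1 := by
    intro x
    apply DHaux.exp_ne_one_of_sin_im
    rw [show (Real.pi:ℂ)*(x:ℂ) + (Real.pi:ℂ)*I*(r:ℂ)/(k:ℂ)
      = ((Real.pi*x : ℝ):ℂ) + ((θ : ℝ):ℂ)*I from by rw [hθdef]; push_cast; ring]
    simpa using ne_of_gt hsθ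
  have hne2 : ∀ x : ℝ, Complex.exp ((Real.pi:ℂ)*(x:ℂ) - (Real.pi:ℂ)*I*(r:ℂ)/(k:ℂ)) ≠ 1 := by
    intro x
    apply DHaux.exp_ne_one_of_sin_im
    rw [show (Real.pi:ℂ)*(x:ℂ) - (Real.pi:ℂ)*I*(r:ℂ)/(k:ℂ)
      = ((Real.pi*x : ℝ):ℂ) + ((-θ : ℝ):ℂ)*I from by rw [hθdef]; push_cast; ring]
    have : Real.sin (-θ) ≠ 0 := by rw [Real.sin_neg]; simpa using ne_of_gt hsθ
    simpa using this
  constructor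
  · -- the shift identity
    have h1 : hhat k r τ u = Complex.I * ∫ x:ℝ, DHaux.Ff β γ θ ↑x := by
      rw [hhat]
      congr 1
      congr 1
      funext x
      unfold DHaux.Ff DHaux.Hh DHaux.d1 DHaux.d2
      rw [show (Real.pi:ℂ)*(x:ℂ) - ((θ:ℝ):ℂ)*I
          = (Real.pi:ℂ)*(x:ℂ) - (Real.pi:ℂ)*I*(r:ℂ)/(k:ℂ) from by rw [hθdef]; push_cast; ring,
        show (Real.pi:ℂ)*(x:ℂ) + ((θ:ℝ):ℂ)*I
          = (Real.pi:ℂ)*(x:ℂ) + (Real.pi:ℂ)*I*(r:ℂ)/(k:ℂ) from by rw [hθdef]; push_cast; ring,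
        ← Complex.exp_add]
      congr 2
      rw [hβdef, hγdef]
      push_cast
      ring
    have h2 : Complex.exp (-(Real.pi : ℂ) * Complex.I * (k : ℂ) * u -
            (Real.pi : ℂ) * Complex.I * (k : ℂ) * τ / 2) * hhat k (k - r) τ (u + τ)
        = Complex.I * ∫ x:ℝ, -(DHaux.Ff β γ θ (↑x + I)) := by
      rw [hhat]
      rw [show Complex.exp (-(Real.pi : ℂ) * Complex.I * (k : ℂ) * u -
            (Real.pi : ℂ) * Complex.I * (k : ℂ) * τ / 2) * (Complex.I * ∫ x : ℝ,
          Complex.exp ((Real.pi : ℂ) * Complex.I * (k : ℂ) * τ * (x : ℂ) ^ 2 / 2) *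
          Complex.exp (-(Real.pi : ℂ) * (k : ℂ) * (u+τ) * (x : ℂ)) *
          (1 / (1 - Complex.exp ((Real.pi : ℂ) * (x : ℂ) - (Real.pi : ℂ) * Complex.I * ((k-r : ℤ) : ℂ) / (k : ℂ))) -
            1 / (1 - Complex.exp ((Real.pi : ℂ) * (x : ℂ) + (Real.pi : ℂ) * Complex.I * ((k-r : ℤ) : ℂ) / (k : ℂ)))))
        = Complex.I * (Complex.exp (-(Real.pi : ℂ) * Complex.I * (k : ℂ) * u -
            (Real.pi : ℂ) * Complex.I * (k : ℂ) * τ / 2) * ∫ x : ℝ,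
          Complex.exp ((Real.pi : ℂ) * Complex.I * (k : ℂ) * τ * (x : ℂ) ^ 2 / 2) *
          Complex.exp (-(Real.pi : ℂ) * (k : ℂ) * (u+τ) * (x : ℂ)) *
          (1 / (1 - Complex.exp ((Real.pi : ℂ) * (x : ℂ) - (Real.pi : ℂ) * Complex.I * ((k-r : ℤ) : ℂ) / (k : ℂ))) -
            1 / (1 - Complex.exp ((Real.pi : ℂ) * (x : ℂ) + (Real.pi : ℂ) * Complex.I * ((k-r : ℤ) : ℂ) / (k : ℂ)))))
        from by ring]
      congr 1
      rw [← MeasureTheory.integral_const_mul]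
      congr 1
      funext x
      -- pointwise identity
      have hA1 : Complex.exp ((Real.pi:ℂ)*((x:ℂ)+I) - ((θ:ℝ):ℂ)*I)
          = Complex.exp ((Real.pi:ℂ)*(x:ℂ) + (Real.pi:ℂ)*I*(((k-r:ℤ)):ℂ)/(k:ℂ)) := by
        congr 1
        rw [hθdef]
        push_cast
        field_simp
        ring
      have hA2 : Complex.exp ((Real.pi:ℂ)*((x:ℂ)+I) + ((θ:ℝ):ℂ)*I)
          = Complex.exp ((Real.pi:ℂ)*(x:ℂ) - (Real.pi:ℂ)*I*(((k-r:ℤ)):ℂ)/(k:ℂ)) := by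
        rw [show (Real.pi:ℂ)*((x:ℂ)+I) + ((θ:ℝ):ℂ)*I
            = ((Real.pi:ℂ)*(x:ℂ) - (Real.pi:ℂ)*I*(((k-r:ℤ)):ℂ)/(k:ℂ)) + 2*(Real.pi:ℂ)*I from by
          rw [hθdef]; push_cast; field_simp; ring]
        rw [Complex.exp_add, Complex.exp_two_pi_mul_I, mul_one]
      unfold DHaux.Ff DHaux.Hh DHaux.d1 DHaux.d2
      rw [hA1, hA2]
      apply DHaux.exp_triple
      · rw [hβdef, hγdef]
        push_cast
        linear_combination (-((Real.pi:ℂ)*(k:ℂ)*τ*(x:ℂ) + (Real.pi:ℂ)*I*(k:ℂ)*τ/2)) * Complex.I_sq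
      · ring
    rw [h1, h2]
    rw [MeasureTheory.integral_neg]
    have hkey := DHaux.key β γ hθ0 hθπ hβre
    have hEe : DHaux.Ee β γ θ = Complex.exp (-(Real.pi : ℂ) * Complex.I * (r : ℂ) * u -
        (Real.pi : ℂ) * Complex.I * (r : ℂ) ^ 2 * τ / (2 * (k : ℂ))) := by
      unfold DHaux.Ee DHaux.Hh DHaux.z0
      congr 1
      have hθπr : (θ/Real.pi : ℝ) = (r:ℝ)/(k:ℝ) := by
        rw [hθdef]
        field_simp
      rw [show ((θ / Real.pi : ℝ) : ℂ) = (r:ℂ)/(k:ℂ) from by rw [hθπr]; push_cast; ring]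
      rw [hβdef, hγdef]
      push_cast
      simp only [mul_pow, Complex.I_sq]
      field_simp
      ring
    have hIw : ∀ w:ℂ, Complex.I*(-2*Complex.I*w) = 2*w := fun w => by
      linear_combination (-2*w)*Complex.I_sq
    rw [show (Complex.I * ∫ (x:ℝ), DHaux.Ff β γ θ ↑x)
        + Complex.I * -∫ (x:ℝ), DHaux.Ff β γ θ (↑x + I)
      = Complex.I * ((∫ (x:ℝ), DHaux.Ff β γ θ ↑x) - ∫ (x:ℝ), DHaux.Ff β γ θ (↑x + I))
      from by ring]
    rw [hkey, hEe, hIw]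
  · -- evenness
    rw [hhat, hhat]
    congr 1
    rw [← MeasureTheory.integral_neg_eq_self (fun x : ℝ =>
      Complex.exp ((Real.pi : ℂ) * Complex.I * (k : ℂ) * τ * (x : ℂ) ^ 2 / 2) *
      Complex.exp (-(Real.pi : ℂ) * (k : ℂ) * u * (x : ℂ)) *
      (1 / (1 - Complex.exp ((Real.pi : ℂ) * (x : ℂ) - (Real.pi : ℂ) * Complex.I * (r : ℂ) / (k : ℂ))) -
        1 / (1 - Complex.exp ((Real.pi : ℂ) * (x : ℂ) + (Real.pi : ℂ) * Complex.I * (r : ℂ) / (k : ℂ))))) volume]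
    congr 1
    funext x
    push_cast
    rw [show (Real.pi:ℂ)*(-(x:ℂ)) - (Real.pi:ℂ)*I*(r:ℂ)/(k:ℂ)
        = -((Real.pi:ℂ)*(x:ℂ) + (Real.pi:ℂ)*I*(r:ℂ)/(k:ℂ)) from by ring,
      show (Real.pi:ℂ)*(-(x:ℂ)) + (Real.pi:ℂ)*I*(r:ℂ)/(k:ℂ)
        = -((Real.pi:ℂ)*(x:ℂ) - (Real.pi:ℂ)*I*(r:ℂ)/(k:ℂ)) from by ring,
      DHaux.one_div_one_sub_exp_neg (hne1 x), DHaux.one_div_one_sub_exp_neg (hne2 x)]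
    rw [show (Real.pi:ℂ)*I*(k:ℂ)*τ*(-(x:ℂ))^2/2 = (Real.pi:ℂ)*I*(k:ℂ)*τ*((x:ℂ))^2/2 from by ring,
      show -(Real.pi:ℂ)*(k:ℂ)*u*(-(x:ℂ)) = -(Real.pi:ℂ)*(k:ℂ)*(-u)*((x:ℂ)) from by ring]
    ring



end DSLST
end
end

section
/- Fix an integer k ≥ 2 and τ in the upper half-plane. Suppose f_1, …, f_{k−1} : ℂ → ℂ are entire functions satisfying, for all u ∈ ℂ and all r ∈ {1, …, k−1}: (i) f_r(u) − (−1)^r f_r(u+1) = 0, and (ii) f_r(u) + e^{−πiku − πikτ/2} f_{k−r}(u+τ) = 0. Then f_r is identically zero for every r. (Consequently the functions ĥ_{k,r} are the unique entire functions of u satisfying their two functional equations.) -/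
noncomputable section

open Complex MeasureTheory Matrix

namespace DSLST

private lemma periodic_int_aux {h : ℂ → ℝ} {c : ℂ} (hp : ∀ u, h (u + c) = h u) :
    ∀ (n : ℤ) (u : ℂ), h (u + n * c) = h u := by
  intro n
  induction n using Int.induction_on with
  | zero => simp
  | succ n ih =>
      intro u
      have he : u + (((n : ℤ) + 1 : ℤ) : ℂ) * c = (u + ((n : ℤ) : ℂ) * c) + c := by
        push_cast; ring
      rw [he, hp]; exact ih u
  | pred n ih =>
      intro u
      have he : (u + ((-(n : ℤ) - 1 : ℤ) : ℂ) * c) + c = u + ((-(n : ℤ) : ℤ) : ℂ) * c := by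
        push_cast; ring
      calc h (u + ((-(n : ℤ) - 1 : ℤ) : ℂ) * c) = h ((u + ((-(n : ℤ) - 1 : ℤ) : ℂ) * c) + c) :=
            (hp _).symm
        _ = h u := by rw [he]; exact ih u

/-- Uniqueness: entire functions satisfying the two functional equations of ĥ_{k,r}
    with vanishing right-hand sides are identically zero. -/
theorem entire_functional_eq_unique (k : ℤ) (hk : 2 ≤ k) (τ : ℂ) (hτ : 0 < τ.im)
    (f : ℤ → ℂ → ℂ)
    (hdiff : ∀ r : ℤ, 1 ≤ r → r ≤ k - 1 → Differentiable ℂ (f r))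
    (h1 : ∀ r : ℤ, 1 ≤ r → r ≤ k - 1 → ∀ u : ℂ, f r u - (-1 : ℂ) ^ r * f r (u + 1) = 0)
    (h2 : ∀ r : ℤ, 1 ≤ r → r ≤ k - 1 → ∀ u : ℂ,
      f r u + Complex.exp (-(Real.pi : ℂ) * Complex.I * (k : ℂ) * u -
          (Real.pi : ℂ) * Complex.I * (k : ℂ) * τ / 2) * f (k - r) (u + τ) = 0) :
    ∀ r : ℤ, 1 ≤ r → r ≤ k - 1 → ∀ u : ℂ, f r u = 0 := by
  intro r hr1 hr2 u
  have htpos : 0 < τ.im := hτ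
  have hkR : (2 : ℝ) ≤ (k : ℝ) := by exact_mod_cast hk
  -- Step 1: f r has period 2
  have hper2 : ∀ v : ℂ, f r (v + 2) = f r v := by
    intro v
    have e1 := h1 r hr1 hr2 v
    have e2 := h1 r hr1 hr2 (v + 1)
    rw [show v + 1 + 1 = v + 2 by ring] at e2
    have hs : ((-1 : ℂ) ^ r) * ((-1 : ℂ) ^ r) = 1 := by
      rw [← zpow_add₀ (by norm_num : (-1 : ℂ) ≠ 0), show r + r = 2 * r by ring, _root_.zpow_mul]
      norm_num
    linear_combination (-1 : ℂ) * e1 - (-1 : ℂ) ^ r * e2 - (f r (v + 2)) * hs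
  -- Step 2: quasi-periodicity in direction 2τ
  have hquasi : ∀ v : ℂ,
      f r (v + 2 * τ) = Complex.exp (2 * (Real.pi : ℂ) * Complex.I * (k : ℂ) * (v + τ)) * f r v := by
    intro v
    have e1 := h2 r hr1 hr2 v
    have e2 := h2 (k - r) (by omega) (by omega) (v + τ)
    rw [show k - (k - r) = r by ring] at e2
    rw [show v + τ + τ = v + 2 * τ by ring] at e2
    set E := Complex.exp (2 * (Real.pi : ℂ) * Complex.I * (k : ℂ) * (v + τ)) with hE
    set P := Complex.exp (-(Real.pi : ℂ) * Complex.I * (k : ℂ) * v -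
      (Real.pi : ℂ) * Complex.I * (k : ℂ) * τ / 2) with hP
    set Q := Complex.exp (-(Real.pi : ℂ) * Complex.I * (k : ℂ) * (v + τ) -
      (Real.pi : ℂ) * Complex.I * (k : ℂ) * τ / 2) with hQ
    have key : E * P * Q = 1 := by
      rw [hE, hP, hQ, ← Complex.exp_add, ← Complex.exp_add, ← Complex.exp_zero]
      congr 1; ring
    linear_combination (E * P) * e2 - E * e1 - (f r (v + 2 * τ)) * key
  -- The doubly periodic real function
  set H : ℂ → ℝ := fun v =>
    ‖f r v‖ * Real.exp (Real.pi * (k : ℝ) * v.im ^ 2 / (2 * τ.im)) with hHdef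
  have hH2 : ∀ v, H (v + 2) = H v := by
    intro v
    simp only [hHdef]
    rw [hper2]
    norm_num
  have hH2τ : ∀ v, H (v + 2 * τ) = H v := by
    intro v
    simp only [hHdef]
    rw [hquasi v, norm_mul, Complex.norm_exp]
    have him : (v + 2 * τ).im = v.im + 2 * τ.im := by
      simp [Complex.add_im, Complex.mul_im]
    have hre : (2 * (Real.pi : ℂ) * Complex.I * (k : ℂ) * (v + τ)).re
        = -(2 * Real.pi * (k : ℝ) * (v.im + τ.im)) := by
      simp [Complex.mul_re, Complex.mul_im, Complex.add_re, Complex.add_im]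
    rw [him, hre, mul_right_comm, ← Real.exp_add, mul_comm (Real.exp _)]
    congr 1
    rw [Real.exp_eq_exp]
    field_simp
    ring
  -- Boundedness
  have hKcomp : IsCompact ((fun p : ℝ × ℝ => (p.1 : ℂ) + (p.2 : ℂ) * Complex.I) ''
      (Set.Icc (0:ℝ) 2 ×ˢ Set.Icc (0:ℝ) (2 * τ.im))) :=
    (isCompact_Icc.prod isCompact_Icc).image (by continuity)
  have hHcont : Continuous H := by
    apply Continuous.mul
    · exact continuous_norm.comp (hdiff r hr1 hr2).continuous
    · exact Real.continuous_exp.comp (by fun_prop)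
  obtain ⟨C, hC⟩ := hKcomp.exists_bound_of_continuousOn hHcont.continuousOn
  have hHb : ∀ v : ℂ, H v ≤ C := by
    intro v
    set n : ℤ := ⌊v.im / (2 * τ.im)⌋ with hn
    set m : ℤ := ⌊(v.re - (n : ℝ) * (2 * τ.re)) / 2⌋ with hm
    set v₀ : ℂ := v - (m : ℂ) * 2 - (n : ℂ) * (2 * τ) with hv₀
    have hval : H v = H v₀ := by
      have hrw : v = v₀ + (m : ℂ) * 2 + (n : ℂ) * (2 * τ) := by rw [hv₀]; ring
      rw [hrw, periodic_int_aux hH2τ n (v₀ + (m : ℂ) * 2), periodic_int_aux hH2 m v₀]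
    have hvim : v₀.im = v.im - (n : ℝ) * (2 * τ.im) := by
      simp [hv₀, Complex.sub_im, Complex.mul_im]
    have hvre : v₀.re = v.re - (m : ℝ) * 2 - (n : ℝ) * (2 * τ.re) := by
      simp [hv₀, Complex.sub_re, Complex.mul_re]
    have h2t : (0:ℝ) < 2 * τ.im := by linarith
    have hfl1 : (n : ℝ) ≤ v.im / (2 * τ.im) := by rw [hn]; exact Int.floor_le _
    have hfl2 : v.im / (2 * τ.im) < (n : ℝ) + 1 := by rw [hn]; exact Int.lt_floor_add_one _
    have him1 : 0 ≤ v₀.im := by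
      rw [hvim]
      have := (le_div_iff₀ h2t).mp hfl1
      linarith
    have him2 : v₀.im ≤ 2 * τ.im := by
      rw [hvim]
      have := (div_lt_iff₀ h2t).mp hfl2
      nlinarith
    have hgl1 : (m : ℝ) ≤ (v.re - (n : ℝ) * (2 * τ.re)) / 2 := by rw [hm]; exact Int.floor_le _
    have hgl2 : (v.re - (n : ℝ) * (2 * τ.re)) / 2 < (m : ℝ) + 1 := by
      rw [hm]; exact Int.lt_floor_add_one _
    have hre1 : 0 ≤ v₀.re := by rw [hvre]; linarith
    have hre2 : v₀.re ≤ 2 := by rw [hvre]; linarith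
    have hmem : v₀ ∈ (fun p : ℝ × ℝ => (p.1 : ℂ) + (p.2 : ℂ) * Complex.I) ''
        (Set.Icc (0:ℝ) 2 ×ˢ Set.Icc (0:ℝ) (2 * τ.im)) :=
      ⟨(v₀.re, v₀.im), ⟨⟨hre1, hre2⟩, ⟨him1, him2⟩⟩, Complex.re_add_im v₀⟩
    calc H v = H v₀ := hval
      _ ≤ ‖H v₀‖ := le_abs_self _
      _ ≤ C := hC _ hmem
  -- f r is bounded
  have hbound : ∀ v : ℂ, ‖f r v‖ ≤ C := by
    intro v
    have hHv := hHb v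
    have hw : 1 ≤ Real.exp (Real.pi * (k : ℝ) * v.im ^ 2 / (2 * τ.im)) :=
      Real.one_le_exp (by positivity)
    have habs : 0 ≤ ‖f r v‖ := norm_nonneg _
    simp only [hHdef] at hHv
    nlinarith
  have hrange : Bornology.IsBounded (Set.range (f r)) := by
    rw [isBounded_iff_forall_norm_le]
    exact ⟨C, by rintro x ⟨v, rfl⟩; simpa using hbound v⟩
  -- Liouville: f r is constant
  have hconst := (hdiff r hr1 hr2).apply_eq_apply_of_bounded hrange
  -- the constant is zero
  have hq := hquasi 0
  rw [zero_add, zero_add] at hq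
  have h20 : f r (2 * τ) = f r 0 := hconst _ _
  have hne : Complex.exp (2 * (Real.pi : ℂ) * Complex.I * (k : ℂ) * τ) ≠ 1 := by
    intro hcontra
    have habs := congrArg norm hcontra
    rw [Complex.norm_exp, norm_one] at habs
    have hre : (2 * (Real.pi : ℂ) * Complex.I * (k : ℂ) * τ).re
        = -(2 * Real.pi * (k : ℝ) * τ.im) := by
      simp [Complex.mul_re, Complex.mul_im]
    rw [hre, Real.exp_eq_one_iff] at habs
    have hk0 : (0:ℝ) < (k:ℝ) := by linarith
    nlinarith [mul_pos (mul_pos (mul_pos two_pos Real.pi_pos) hk0) htpos]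
  have hzero : f r 0 = 0 := by
    have hmul : (1 - Complex.exp (2 * (Real.pi : ℂ) * Complex.I * (k : ℂ) * τ)) * f r 0 = 0 := by
      rw [h20] at hq
      linear_combination hq
    rcases mul_eq_zero.mp hmul with h | h
    · exact absurd (by linear_combination -h) hne
    · exact h
  rw [hconst u 0, hzero]


end DSLST
end
end

section
/- For every integer k ≥ 2, every r ∈ {1, …, k−1}, every τ in the upper half-plane and every u ∈ ℂ: (a) R̂_{k,r}(τ; u) = R̂_{k,r}(τ; −u); (b) R̂_{k,r}(τ; u) + (−1)^{r+1} R̂_{k,r}(τ; u+1) = 0; (c) R̂_{k,r}(τ; u) + e^{−πiku − πikτ/2} R̂_{k,k−r}(τ; u+τ) = 2 e^{−πiru − πir²τ/(2k)}. -/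
noncomputable section

open Complex MeasureTheory Matrix

namespace DSLST

lemma gauss_integrableOn (s : Set ℝ) :
    IntegrableOn (fun t : ℝ => Real.exp (-Real.pi * t ^ 2)) s := by
  exact (integrable_exp_neg_mul_sq Real.pi_pos).integrableOn

lemma Efun_neg (z : ℝ) : Efun (-z) = - Efun z := by
  unfold Efun
  rw [← mul_neg]
  congr 1
  have h := intervalIntegral.integral_comp_neg (a := 0) (b := z)
    (fun t : ℝ => Real.exp (-Real.pi * t ^ 2))
  simp only [neg_zero, neg_sq] at h
  rw [h, intervalIntegral.integral_symm]

lemma Efun_eq_one_sub (z : ℝ) (hz : 0 ≤ z) :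
    Efun z = 1 - 2 * ∫ t in Set.Ioi z, Real.exp (-Real.pi * t ^ 2) := by
  have hsplit : (∫ t in Set.Ioi (0:ℝ), Real.exp (-Real.pi * t ^ 2))
      = (∫ t in Set.Ioc (0:ℝ) z, Real.exp (-Real.pi * t ^ 2))
        + ∫ t in Set.Ioi z, Real.exp (-Real.pi * t ^ 2) := by
    rw [← MeasureTheory.setIntegral_union (Set.Ioc_disjoint_Ioi le_rfl) measurableSet_Ioi
      (gauss_integrableOn _) (gauss_integrableOn _), Set.Ioc_union_Ioi_eq_Ioi hz]
  have hgauss : (∫ t in Set.Ioi (0:ℝ), Real.exp (-Real.pi * t ^ 2)) = 1/2 := by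
    rw [integral_gaussian_Ioi]
    simp [Real.sqrt_eq_one.mpr, div_self (ne_of_gt Real.pi_pos)]
  unfold Efun
  rw [intervalIntegral.integral_of_le hz]
  rw [eq_comm]
  have := hsplit.symm.trans hgauss
  linarith [this]

lemma tail_le (z : ℝ) (hz : 1 ≤ z) :
    (∫ t in Set.Ioi z, Real.exp (-Real.pi * t ^ 2)) ≤ Real.exp (-Real.pi * z ^ 2) := by
  have hmono : ∀ t ∈ Set.Ioi z, Real.exp (-Real.pi * t ^ 2)
      ≤ Real.exp (-Real.pi * z ^ 2 + z) * Real.exp (-(1:ℝ) * t) := by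
    intro t ht
    rw [← Real.exp_add]
    apply Real.exp_le_exp.mpr
    have ht' : z ≤ t := le_of_lt ht
    have h2 : (1:ℝ) ≤ Real.pi * (t + z) := by nlinarith [Real.pi_gt_three]
    have h1 : t - z ≤ (Real.pi * (t + z)) * (t - z) :=
      le_mul_of_one_le_left (by linarith) h2
    nlinarith [h1]
  calc (∫ t in Set.Ioi z, Real.exp (-Real.pi * t ^ 2))
      ≤ ∫ t in Set.Ioi z, Real.exp (-Real.pi * z ^ 2 + z) * Real.exp (-(1:ℝ) * t) := by
        exact MeasureTheory.setIntegral_mono_on (gauss_integrableOn _)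
          ((exp_neg_integrableOn_Ioi z one_pos).const_mul _)
          measurableSet_Ioi hmono
    _ = Real.exp (-Real.pi * z ^ 2 + z) * Real.exp (-z) := by
        rw [MeasureTheory.integral_const_mul]
        simp only [neg_one_mul, integral_exp_neg_Ioi]
    _ = Real.exp (-Real.pi * z ^ 2) := by rw [← Real.exp_add]; ring_nf

lemma norm_Rterm (k : ℤ) (hk : (0:ℤ) < k) (τ u : ℂ) (n : ℤ) :
    ‖Rterm k τ u n‖ =
      |Real.sign ((n:ℝ) + 1/2) -
          Efun (((n:ℝ) + (k:ℝ) * u.im / τ.im) * Real.sqrt (τ.im / (k:ℝ)))| *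
        Real.exp (Real.pi * τ.im / (2*(k:ℝ)) * (n:ℝ)^2 + Real.pi * u.im * (n:ℝ)) := by
  have hk0 : ((k:ℝ)) ≠ 0 := by exact_mod_cast hk.ne'
  unfold Rterm
  rw [norm_mul, Complex.norm_real, Real.norm_eq_abs, Complex.norm_exp]
  congr 1
  have hexp : (-(Real.pi : ℂ) * Complex.I * (n : ℂ) ^ 2 * τ / (2 * (k : ℂ))
        - (Real.pi : ℂ) * Complex.I * (n : ℂ) * u)
      = ((Real.pi * (n:ℝ)^2 / (2*(k:ℝ)) : ℝ) : ℂ) * (-(Complex.I * τ))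
        + ((Real.pi * (n:ℝ) : ℝ) : ℂ) * (-(Complex.I * u)) := by
    have : ((k:ℝ):ℂ) ≠ 0 := by exact_mod_cast hk0
    push_cast
    field_simp
    ring
  rw [hexp]
  simp only [Complex.add_re, Complex.re_ofReal_mul, Complex.neg_re, Complex.neg_im,
    Complex.mul_re, Complex.mul_im, Complex.I_re, Complex.I_im, Complex.ofReal_re,
    Complex.ofReal_im, zero_mul, one_mul, zero_sub, neg_neg]
  ring


lemma tail_nonneg (z : ℝ) : 0 ≤ ∫ t in Set.Ioi z, Real.exp (-Real.pi * t ^ 2) :=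
  setIntegral_nonneg measurableSet_Ioi (fun t _ => Real.exp_nonneg _)

lemma abs_one_sub_Efun (z : ℝ) (hz : 1 ≤ z) :
    |1 - Efun z| ≤ 2 * Real.exp (-Real.pi * z ^ 2) := by
  rw [Efun_eq_one_sub z (by linarith)]
  have h0 := tail_nonneg z
  have h1 := tail_le z hz
  rw [show (1 - (1 - 2 * ∫ t in Set.Ioi z, Real.exp (-Real.pi * t ^ 2)))
      = 2 * ∫ t in Set.Ioi z, Real.exp (-Real.pi * t ^ 2) by ring]
  rw [_root_.abs_of_nonneg (by linarith)]
  linarith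

lemma summable_gauss (c : ℝ) (hc : 0 < c) :
    Summable (fun n : ℤ => 2 * Real.exp (-c * (n:ℝ)^2)) := by
  have hgeo : Summable (fun n : ℕ => 2 * Real.exp (-c) ^ n) :=
    (summable_geometric_of_lt_one (Real.exp_nonneg _)
      (Real.exp_lt_one_iff.mpr (by linarith))).mul_left 2
  have hnat : Summable (fun n : ℕ => 2 * Real.exp (-c * (n:ℝ)^2)) := by
    apply Summable.of_nonneg_of_le (fun n => by positivity) (fun n => ?_) hgeo
    rw [← Real.exp_nat_mul]
    have hn2 : (n:ℝ) ≤ (n:ℝ)^2 := by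
      exact_mod_cast Nat.le_self_pow (by norm_num) n
    have : -c * (n:ℝ)^2 ≤ (n:ℝ) * (-c) := by nlinarith
    nlinarith [Real.exp_le_exp.mpr this]
  refine Summable.of_nat_of_neg hnat (hnat.congr fun n => ?_)
  push_cast
  ring_nf

lemma Rterm_bound (k : ℤ) (hk : 2 ≤ k) (τ : ℂ) (hτ : 0 < τ.im) (u : ℂ) :
    ∃ M : ℝ, ∀ n : ℤ, M ≤ |(n:ℝ)| →
      ‖Rterm k τ u n‖ ≤ 2 * Real.exp (-(Real.pi * τ.im / (4*(k:ℝ))) * (n:ℝ)^2) := by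
  have hk0 : (0:ℤ) < k := by omega
  have hK : (0:ℝ) < (k:ℝ) := by exact_mod_cast hk0
  set t2 := τ.im with ht2
  set c : ℝ := Real.pi * t2 / (2*(k:ℝ)) with hc
  have hcpos : 0 < c := by positivity
  set s : ℝ := Real.sqrt (t2 / (k:ℝ)) with hsdef
  have hs : 0 < s := Real.sqrt_pos.mpr (by positivity)
  have hs2 : s^2 = t2 / (k:ℝ) := Real.sq_sqrt (by positivity)
  set a : ℝ := (k:ℝ) * u.im / t2 with ha
  refine ⟨max ((2/c) * |Real.pi*u.im - 4*c*a| + 1) (1/s + |a| + 1), fun n hn => ?_⟩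
  have hM1 : (2/c) * |Real.pi*u.im - 4*c*a| + 1 ≤ |(n:ℝ)| := le_trans (le_max_left _ _) hn
  have hM2 : 1/s + |a| + 1 ≤ |(n:ℝ)| := le_trans (le_max_right _ _) hn
  set x : ℝ := ((n:ℝ) + a) * s with hx
  rw [norm_Rterm k hk0 τ u n]
  -- coefficient bound
  have hcoef : |Real.sign ((n:ℝ) + 1/2) - Efun x| ≤ 2 * Real.exp (-Real.pi * x^2) := by
    rcases le_or_gt 0 n with h | h
    · have hnM : (1/s + |a| + 1) ≤ (n:ℝ) := by
        rwa [_root_.abs_of_nonneg (show (0:ℝ) ≤ (n:ℝ) by exact_mod_cast h)] at hM2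
      have hsx : 1/s ≤ (n:ℝ) + a := by linarith [neg_abs_le a]
      have hx1 : 1 ≤ x := by
        calc (1:ℝ) = (1/s) * s := (one_div_mul_cancel hs.ne').symm
        _ ≤ ((n:ℝ) + a) * s := mul_le_mul_of_nonneg_right hsx hs.le
      rw [Real.sign_of_pos (show (0:ℝ) < (n:ℝ) + 1/2 by positivity)]
      exact abs_one_sub_Efun x hx1
    · have hneg : (n:ℝ) ≤ -1 := by exact_mod_cast Int.cast_le.mpr (by omega : n ≤ -1)
      have hnM : (1/s + |a| + 1) ≤ -(n:ℝ) := by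
        rwa [_root_.abs_of_nonpos (show (n:ℝ) ≤ (0:ℝ) by linarith)] at hM2
      have hsx : 1/s ≤ -((n:ℝ) + a) := by linarith [neg_abs_le a, le_abs_self a]
      have hx1 : 1 ≤ -x := by
        calc (1:ℝ) = (1/s) * s := (one_div_mul_cancel hs.ne').symm
        _ ≤ (-((n:ℝ) + a)) * s := mul_le_mul_of_nonneg_right hsx hs.le
        _ = -x := by rw [hx]; ring
      rw [Real.sign_of_neg (show (n:ℝ) + 1/2 < 0 by linarith)]
      have heq : (-1 : ℝ) - Efun x = -(1 - Efun (-x)) := by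
        rw [Efun_neg]; ring
      rw [heq, abs_neg]
      calc |1 - Efun (-x)| ≤ 2 * Real.exp (-Real.pi * (-x)^2) := abs_one_sub_Efun (-x) hx1
      _ = 2 * Real.exp (-Real.pi * x^2) := by rw [neg_sq]
  -- exponent computation
  have hx2 : Real.pi * x^2 = 2*c*((n:ℝ)+a)^2 := by
    rw [hx, mul_pow, hs2, hc]
    field_simp
  have hexp : -Real.pi * x^2 + (Real.pi * t2 / (2*(k:ℝ)) * (n:ℝ)^2 + Real.pi * u.im * (n:ℝ))
      ≤ -(Real.pi * t2 / (4*(k:ℝ))) * (n:ℝ)^2 := by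
    have hDn : (Real.pi*u.im - 4*c*a) * (n:ℝ) ≤ |Real.pi*u.im - 4*c*a| * |(n:ℝ)| :=
      le_trans (le_abs_self _) (abs_mul _ _).le
    have h3 : (2/c) * |Real.pi*u.im - 4*c*a| ≤ |(n:ℝ)| := by linarith
    have h5 : (2/c) * |Real.pi*u.im - 4*c*a| * |(n:ℝ)| ≤ |(n:ℝ)| * |(n:ℝ)| :=
      mul_le_mul_of_nonneg_right h3 (abs_nonneg _)
    rw [abs_mul_abs_self] at h5
    have hcne : c ≠ 0 := hcpos.ne'
    have h7 : (c/2) * ((2/c) * |Real.pi*u.im - 4*c*a| * |(n:ℝ)|)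
        = |Real.pi*u.im - 4*c*a| * |(n:ℝ)| := by
      field_simp
    have h4 : |Real.pi*u.im - 4*c*a| * |(n:ℝ)| ≤ (c/2) * (n:ℝ)^2 := by
      calc |Real.pi*u.im - 4*c*a| * |(n:ℝ)|
          = (c/2) * ((2/c) * |Real.pi*u.im - 4*c*a| * |(n:ℝ)|) := h7.symm
        _ ≤ (c/2) * ((n:ℝ) * (n:ℝ)) := mul_le_mul_of_nonneg_left h5 (by positivity)
        _ = (c/2) * (n:ℝ)^2 := by ring
    have hx2' : -Real.pi * x^2 = -(2*c*((n:ℝ)+a)^2) := by rw [neg_mul, hx2]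
    have hc2 : Real.pi * t2 / (2*(k:ℝ)) = c := hc.symm
    have hc4 : Real.pi * t2 / (4*(k:ℝ)) = c/2 := by rw [hc]; ring
    rw [hx2', hc2, hc4]
    nlinarith [hDn, h4, mul_nonneg hcpos.le (sq_nonneg a)]
  calc |Real.sign ((n:ℝ) + 1/2) - Efun x| *
        Real.exp (Real.pi * t2 / (2*(k:ℝ)) * (n:ℝ)^2 + Real.pi * u.im * (n:ℝ))
      ≤ (2 * Real.exp (-Real.pi * x^2)) *
        Real.exp (Real.pi * t2 / (2*(k:ℝ)) * (n:ℝ)^2 + Real.pi * u.im * (n:ℝ)) :=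
        mul_le_mul_of_nonneg_right hcoef (Real.exp_nonneg _)
    _ = 2 * Real.exp (-Real.pi * x^2 + (Real.pi * t2 / (2*(k:ℝ)) * (n:ℝ)^2
          + Real.pi * u.im * (n:ℝ))) := by rw [mul_assoc, ← Real.exp_add]
    _ ≤ 2 * Real.exp (-(Real.pi * t2 / (4*(k:ℝ))) * (n:ℝ)^2) :=
        mul_le_mul_of_nonneg_left (Real.exp_le_exp.mpr hexp) (by norm_num)

lemma summable_Rterm (k : ℤ) (hk : 2 ≤ k) (τ : ℂ) (hτ : 0 < τ.im) (u : ℂ) :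
    Summable (fun n : ℤ => Rterm k τ u n) := by
  have hK : (0:ℝ) < (k:ℝ) := by exact_mod_cast (by omega : (0:ℤ) < k)
  obtain ⟨M, hM⟩ := Rterm_bound k hk τ hτ u
  apply Summable.of_norm_bounded_eventually
    (g := fun n : ℤ => 2 * Real.exp (-(Real.pi * τ.im / (4*(k:ℝ))) * (n:ℝ)^2))
    (summable_gauss _ (by positivity))
  rw [Filter.eventually_cofinite]
  apply Set.Finite.subset (Set.finite_Icc (-(max ⌈M⌉ 0)) (max ⌈M⌉ 0))
  intro n hn
  simp only [Set.mem_setOf_eq] at hn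
  by_contra hmem
  apply hn
  apply hM
  have hMc : M ≤ ((max ⌈M⌉ 0 : ℤ) : ℝ) :=
    le_trans (Int.le_ceil M) (by exact_mod_cast le_max_left _ _)
  simp only [Set.mem_Icc, not_and_or, not_le] at hmem
  rcases hmem with h | h
  · have h' : (n:ℝ) < -((max ⌈M⌉ 0 : ℤ) : ℝ) := by exact_mod_cast h
    calc M ≤ ((max ⌈M⌉ 0 : ℤ) : ℝ) := hMc
      _ ≤ -(n:ℝ) := by linarith
      _ ≤ |(n:ℝ)| := neg_le_abs _
  · have h' : ((max ⌈M⌉ 0 : ℤ) : ℝ) < (n:ℝ) := by exact_mod_cast h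
    calc M ≤ ((max ⌈M⌉ 0 : ℤ) : ℝ) := hMc
      _ ≤ (n:ℝ) := h'.le
      _ ≤ |(n:ℝ)| := le_abs_self _

lemma summable_Rterm_ap (k : ℤ) (hk : 2 ≤ k) (τ : ℂ) (hτ : 0 < τ.im) (u : ℂ) (j : ℤ) :
    Summable (fun m : ℤ => Rterm k τ u (j + 2*k*m)) := by
  have hinj : Function.Injective (fun m : ℤ => j + 2*k*m) := by
    intro m m' h
    simp only at h
    exact mul_left_cancel₀ (show (2*k:ℤ) ≠ 0 by omega) (add_left_cancel h)
  exact (summable_Rterm k hk τ hτ u).comp_injective hinj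

-- ### auxiliary sign facts
lemma sign_int_pos (n : ℤ) (h : 0 ≤ n) : Real.sign ((n:ℝ) + 1/2) = 1 := by
  have h' : (0:ℝ) ≤ (n:ℝ) := by exact_mod_cast h
  exact Real.sign_of_pos (by linarith)

lemma sign_int_neg (n : ℤ) (h : n < 0) : Real.sign ((n:ℝ) + 1/2) = -1 := by
  have h' : (n:ℝ) ≤ -1 := by exact_mod_cast (by omega : n ≤ -1)
  exact Real.sign_of_neg (by linarith)

-- ### part (a) pointwise
lemma Rterm_neg_u (k : ℤ) (τ u : ℂ) (n : ℤ) (hn : n ≠ 0) :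
    Rterm k τ (-u) n = - Rterm k τ u (-n) := by
  unfold Rterm
  rw [← neg_mul]
  have hsign : Real.sign ((n:ℝ) + 1/2) = - Real.sign (((-n : ℤ):ℝ) + 1/2) := by
    rcases lt_or_gt_of_ne hn with h | h
    · have e1 := sign_int_neg n h
      have e2 := sign_int_pos (-n) (by omega)
      rw [e1, e2]
    · have e1 := sign_int_pos n (by omega)
      have e2 := sign_int_neg (-n) (by omega)
      rw [e1, e2]
      norm_num
  have hE : ((n:ℝ) + (k:ℝ) * (-u).im / τ.im) * Real.sqrt (τ.im/(k:ℝ))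
      = -(((((-n):ℤ):ℝ) + (k:ℝ) * u.im / τ.im) * Real.sqrt (τ.im/(k:ℝ))) := by
    simp only [Complex.neg_im]
    push_cast
    ring_nf
  congr 1
  · rw [hE, Efun_neg, hsign]
    push_cast
    ring
  · congr 1
    push_cast
    ring

lemma nonzero_aux (k r m : ℤ) (hk : 2 ≤ k) (h1 : 1 ≤ r) (h2 : r ≤ 2*k - 1) :
    r + 2*k*m ≠ 0 := by
  intro h
  rcases le_or_gt m (-1) with hm | hm
  · nlinarith
  rcases le_or_gt 1 m with hm' | hm'
  · nlinarith
  · have : m = 0 := by omega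
    subst this
    omega

lemma Rhat_even (k : ℤ) (hk : 2 ≤ k) (r : ℤ) (hr1 : 1 ≤ r) (hr2 : r ≤ k - 1)
    (τ : ℂ) (u : ℂ) : Rhat k r τ (-u) = Rhat k r τ u := by
  unfold Rhat
  have h1 : ∀ m : ℤ, Rterm k τ (-u) (r + 2*k*m) = - Rterm k τ u (-r + 2*k*(-m)) := by
    intro m
    rw [Rterm_neg_u k τ u _ (nonzero_aux k r m hk hr1 (by omega))]
    congr 2
    ring
  have h2 : ∀ m : ℤ, Rterm k τ (-u) (-r + 2*k*m) = - Rterm k τ u (r + 2*k*(-m)) := by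
    intro m
    have hnz : -r + 2*k*m ≠ 0 := by
      have := nonzero_aux k (2*k - r) (m-1) hk (by omega) (by omega)
      intro h; apply this; linarith [h]
    rw [Rterm_neg_u k τ u _ hnz]
    congr 2
    ring
  rw [tsum_congr h1, tsum_congr h2, tsum_neg, tsum_neg]
  have e1 := (Equiv.neg ℤ).tsum_eq (fun m => Rterm k τ u (-r + 2*k*m))
  have e2 := (Equiv.neg ℤ).tsum_eq (fun m => Rterm k τ u (r + 2*k*m))
  simp only [Equiv.neg_apply] at e1 e2
  rw [e1, e2]
  ring

-- ### part (b)
lemma exp_neg_pi_I_int (j : ℤ) :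
    Complex.exp (-(Real.pi:ℂ) * Complex.I * (j:ℂ)) = (-1:ℂ)^j := by
  have h : (-(Real.pi:ℂ) * Complex.I * (j:ℂ)) = (j:ℂ) * -((Real.pi:ℂ) * Complex.I) := by ring
  rw [h, Complex.exp_int_mul, Complex.exp_neg, Complex.exp_pi_mul_I]
  norm_num

lemma neg_one_zpow_neg' (r : ℤ) : (-1:ℂ)^(-r) = (-1:ℂ)^r := by
  rw [_root_.zpow_neg]
  refine inv_eq_of_mul_eq_one_right ?_
  rw [← zpow_add₀ (by norm_num : (-1:ℂ) ≠ 0), show r + r = 2*r by ring, _root_.zpow_mul]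
  norm_num

lemma Rterm_add_one (k : ℤ) (τ u : ℂ) (j m : ℤ) :
    Rterm k τ (u + 1) (j + 2*k*m) = (-1:ℂ)^j * Rterm k τ u (j + 2*k*m) := by
  have h1 : Rterm k τ (u+1) (j + 2*k*m)
      = Complex.exp (-(Real.pi:ℂ)*Complex.I*(((j + 2*k*m : ℤ)):ℂ))
          * Rterm k τ u (j + 2*k*m) := by
    have him : (u + 1).im = u.im := by simp
    unfold Rterm
    rw [him]
    conv_rhs => rw [mul_left_comm, ← Complex.exp_add]
    congr 1
    push_cast
    ring
  have h2 : Complex.exp (-(Real.pi:ℂ)*Complex.I*(((j + 2*k*m : ℤ)):ℂ))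
      = (-1:ℂ)^j := by
    have harg : (-(Real.pi:ℂ)*Complex.I*(((j + 2*k*m : ℤ)):ℂ))
        = -(Real.pi:ℂ)*Complex.I*(j:ℂ) + (((-(k*m)) : ℤ):ℂ) * (2*(Real.pi:ℂ)*Complex.I) := by
      push_cast
      ring
    rw [harg, Complex.exp_add, Complex.exp_int_mul_two_pi_mul_I, mul_one, exp_neg_pi_I_int]
  rw [h1, h2]

lemma Rhat_add_one (k r : ℤ) (τ u : ℂ) :
    Rhat k r τ (u + 1) = (-1:ℂ)^r * Rhat k r τ u := by
  unfold Rhat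
  rw [tsum_congr (fun m => Rterm_add_one k τ u r m),
      tsum_congr (fun m => Rterm_add_one k τ u (-r) m),
      tsum_mul_left, tsum_mul_left, neg_one_zpow_neg']
  ring

-- ### part (c) pointwise shift
lemma Rterm_shift (k : ℤ) (hk : 2 ≤ k) (τ : ℂ) (hτ : 0 < τ.im) (u : ℂ) (n : ℤ) :
    Complex.exp (-(Real.pi:ℂ)*Complex.I*(k:ℂ)*u - (Real.pi:ℂ)*Complex.I*(k:ℂ)*τ/2) *
      Rterm k τ (u + τ) (n - k)
    = ((Real.sign (((n - k : ℤ):ℝ) + 1/2) -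
        Efun (((n:ℝ) + (k:ℝ)*u.im/τ.im) * Real.sqrt (τ.im/(k:ℝ))) : ℝ):ℂ) *
      Complex.exp (-(Real.pi:ℂ)*Complex.I*(n:ℂ)^2*τ/(2*(k:ℂ))
        - (Real.pi:ℂ)*Complex.I*(n:ℂ)*u) := by
  have hkR : ((k:ℝ)) ≠ 0 := by
    have : (0:ℝ) < (k:ℝ) := by exact_mod_cast (by omega : (0:ℤ) < k)
    exact this.ne'
  have hkC : ((k:ℂ)) ≠ 0 := by exact_mod_cast (show (k:ℝ) ≠ 0 from hkR)
  have htne : τ.im ≠ 0 := hτ.ne'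
  unfold Rterm
  have hEarg : ((((n - k : ℤ)):ℝ) + (k:ℝ)*(u+τ).im/τ.im) * Real.sqrt (τ.im/(k:ℝ))
      = ((n:ℝ) + (k:ℝ)*u.im/τ.im) * Real.sqrt (τ.im/(k:ℝ)) := by
    have harg : (((n - k : ℤ)):ℝ) + (k:ℝ)*(u+τ).im/τ.im = (n:ℝ) + (k:ℝ)*u.im/τ.im := by
      simp only [Complex.add_im]
      push_cast
      field_simp
      ring
    rw [harg]
  rw [hEarg]
  conv_lhs => rw [mul_left_comm, ← Complex.exp_add]
  congr 2
  push_cast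
  field_simp
  ring

-- ### the main theorem
/-- Proposition: elliptic properties of R̂_{k,r}. -/
theorem Rhat_elliptic (k : ℤ) (hk : 2 ≤ k) (r : ℤ) (hr1 : 1 ≤ r) (hr2 : r ≤ k - 1)
    (τ : ℂ) (hτ : 0 < τ.im) (u : ℂ) :
    Rhat k r τ u = Rhat k r τ (-u) ∧
    Rhat k r τ u + (-1 : ℂ) ^ (r + 1) * Rhat k r τ (u + 1) = 0 ∧
    Rhat k r τ u +
        Complex.exp (-(Real.pi : ℂ) * Complex.I * (k : ℂ) * u -
            (Real.pi : ℂ) * Complex.I * (k : ℂ) * τ / 2) *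
          Rhat k (k - r) τ (u + τ) =
      2 * Complex.exp (-(Real.pi : ℂ) * Complex.I * (r : ℂ) * u -
        (Real.pi : ℂ) * Complex.I * (r : ℂ) ^ 2 * τ / (2 * (k : ℂ))) := by
  refine ⟨(Rhat_even k hk r hr1 hr2 τ u).symm, ?_, ?_⟩
  · rw [Rhat_add_one k r τ u, ← mul_assoc]
    have h : (-1:ℂ)^(r+1) * (-1:ℂ)^r = -1 := by
      rw [← zpow_add₀ (by norm_num : (-1:ℂ) ≠ 0), show r + 1 + r = 2*r + 1 by ring,
        zpow_add₀ (by norm_num : (-1:ℂ) ≠ 0), _root_.zpow_mul]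
      norm_num
    rw [h]
    ring
  · set P := Complex.exp (-(Real.pi : ℂ) * Complex.I * (k : ℂ) * u -
      (Real.pi : ℂ) * Complex.I * (k : ℂ) * τ / 2) with hP
    set F : ℤ → ℂ := fun n =>
      ((Real.sign (((n - k : ℤ):ℝ) + 1/2) -
          Efun (((n:ℝ) + (k:ℝ)*u.im/τ.im) * Real.sqrt (τ.im/(k:ℝ))) : ℝ):ℂ) *
        Complex.exp (-(Real.pi:ℂ)*Complex.I*(n:ℂ)^2*τ/(2*(k:ℂ))
          - (Real.pi:ℂ)*Complex.I*(n:ℂ)*u) with hF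
    have hFR : ∀ n : ℤ, P * Rterm k τ (u + τ) (n - k) = F n :=
      fun n => Rterm_shift k hk τ hτ u n
    have hsumF : ∀ j : ℤ, Summable (fun m : ℤ => F (j + 2*k*m)) := by
      intro j
      apply ((summable_Rterm_ap k hk τ hτ (u+τ) (j - k)).mul_left P).congr
      intro m
      show P * Rterm k τ (u + τ) (j - k + 2*k*m) = F (j + 2*k*m)
      rw [← hFR (j + 2*k*m)]
      congr 2
      ring
    have hkey : P * Rhat k (k - r) τ (u + τ)
        = (∑' m : ℤ, F (-r + 2*k*m)) - ∑' m : ℤ, F (r + 2*k*m) := by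
      unfold Rhat
      rw [mul_sub, ← tsum_mul_left, ← tsum_mul_left]
      congr 1
      · have h1 : ∀ m : ℤ, P * Rterm k τ (u+τ) ((k - r) + 2*k*m) = F (-r + 2*k*(m+1)) := by
          intro m
          rw [← hFR (-r + 2*k*(m+1))]
          congr 2
          ring
        rw [tsum_congr h1]
        have := (Equiv.addRight (1:ℤ)).tsum_eq (fun m => F (-r + 2*k*m))
        simp only [Equiv.coe_addRight] at this
        exact this
      · have h2 : ∀ m : ℤ, P * Rterm k τ (u+τ) (-(k - r) + 2*k*m) = F (r + 2*k*m) := by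
          intro m
          rw [← hFR (r + 2*k*m)]
          congr 2
          ring
        exact tsum_congr h2
    have hdiff : ∀ (j m : ℤ), Rterm k τ u (j + 2*k*m) - F (j + 2*k*m)
        = ((Real.sign (((j + 2*k*m : ℤ):ℝ) + 1/2)
            - Real.sign (((j + 2*k*m - k : ℤ):ℝ) + 1/2) : ℝ):ℂ) *
          Complex.exp (-(Real.pi:ℂ)*Complex.I*((j + 2*k*m : ℤ):ℂ)^2*τ/(2*(k:ℂ))
            - (Real.pi:ℂ)*Complex.I*((j + 2*k*m : ℤ):ℂ)*u) := by
      intro j m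
      unfold Rterm
      rw [hF]
      simp only
      rw [← sub_mul]
      congr 1
      push_cast
      ring
    have t2 : ∑' m : ℤ, (Rterm k τ u (-r + 2*k*m) - F (-r + 2*k*m)) = 0 := by
      have hz : ∀ m : ℤ, Rterm k τ u (-r + 2*k*m) - F (-r + 2*k*m) = 0 := by
        intro m
        rw [hdiff]
        rcases le_or_gt 1 m with hm | hm
        · rw [sign_int_pos _ (by nlinarith), sign_int_pos _ (by nlinarith)]
          norm_num
        · have hm' : m ≤ 0 := by omega
          rw [sign_int_neg _ (by nlinarith), sign_int_neg _ (by nlinarith)]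
          norm_num
      rw [tsum_congr hz, tsum_zero]
    have t1 : ∑' m : ℤ, (Rterm k τ u (r + 2*k*m) - F (r + 2*k*m))
        = 2 * Complex.exp (-(Real.pi : ℂ) * Complex.I * (r : ℂ) * u -
            (Real.pi : ℂ) * Complex.I * (r : ℂ) ^ 2 * τ / (2 * (k : ℂ))) := by
      rw [tsum_eq_single 0 ?_]
      · rw [hdiff]
        rw [sign_int_pos _ (by omega), sign_int_neg _ (by omega)]
        have hcast : ((r + 2*k*0 : ℤ):ℂ) = (r:ℂ) := by push_cast; ring
        rw [hcast]
        rw [show ((1:ℝ) - (-1)) = (2:ℝ) by norm_num]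
        push_cast
        rw [show (-(Real.pi:ℂ) * Complex.I * (r:ℂ) * u -
              (Real.pi:ℂ) * Complex.I * (r:ℂ)^2 * τ / (2*(k:ℂ)))
            = -(Real.pi:ℂ) * Complex.I * (r:ℂ)^2 * τ / (2*(k:ℂ))
              - (Real.pi:ℂ) * Complex.I * (r:ℂ) * u from by ring]
      · intro m hm
        rw [hdiff]
        rcases le_or_gt 1 m with hmm | hmm
        · rw [sign_int_pos _ (by nlinarith), sign_int_pos _ (by nlinarith)]
          norm_num
        · have hm' : m ≤ -1 := by omega
          rw [sign_int_neg _ (by nlinarith), sign_int_neg _ (by nlinarith)]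
          norm_num
    have hsub1 := Summable.tsum_sub (summable_Rterm_ap k hk τ hτ u r) (hsumF r)
    have hsub2 := Summable.tsum_sub (summable_Rterm_ap k hk τ hτ u (-r)) (hsumF (-r))
    rw [hkey]
    unfold Rhat
    rw [t1] at hsub1
    rw [t2] at hsub2
    linear_combination hsub2 - hsub1


end DSLST
end
end
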